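/- arXiv:2307.09868 — 10 statements merged into one kernel-verified Lean document; each statement's English description precedes it below -/
import Mathlib

section
/- Let G be a finite group, π a set of primes, and N a normal π-subgroup of G. Then the set of π-elements of G/N is exactly the image of the set of π-elements of G under the quotient map, and the number of π-elements of G/N equals |G_π|/|N|, where G_π denotes the set of π-elements of G. -/
/-- For a finite group `G`, a set of primes `π` and a normal `π`-subgroup `N`,
the `π`-elements of `G/N` are exactly the images of the `π`-elements of `G`,
and their number is `|G_π| / |N|`. -/
theorem piElements_quotient {G : Type*} [Group G] [Finite G] (π : Set ℕ)
    (hπ : ∀ q ∈ π, Nat.Prime q) (N : Subgroup G) [N.Normal]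
    (hN : ∀ n ∈ N, ∀ q : ℕ, q.Prime → q ∣ orderOf n → q ∈ π) :
    ((QuotientGroup.mk : G → G ⧸ N) ''
        {g : G | ∀ q : ℕ, q.Prime → q ∣ orderOf g → q ∈ π}
      = {g : G ⧸ N | ∀ q : ℕ, q.Prime → q ∣ orderOf g → q ∈ π}) ∧
    Nat.card {g : G ⧸ N | ∀ q : ℕ, q.Prime → q ∣ orderOf g → q ∈ π}
      = Nat.card {g : G | ∀ q : ℕ, q.Prime → q ∣ orderOf g → q ∈ π} / Nat.card N := by
  set S : Set (G ⧸ N) := {g : G ⧸ N | ∀ q : ℕ, q.Prime → q ∣ orderOf g → q ∈ π} with hS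
  have hpre : (QuotientGroup.mk : G → G ⧸ N) ⁻¹' S
      = {g : G | ∀ q : ℕ, q.Prime → q ∣ orderOf g → q ∈ π} := by
    ext g
    constructor
    · intro hg q hq hdvd
      set k := orderOf ((g : G ⧸ N)) with hk
      have hgk : g ^ k ∈ N := by
        rw [← QuotientGroup.eq_one_iff, QuotientGroup.mk_pow]
        exact pow_orderOf_eq_one _
      have hdd : orderOf g ∣ k * orderOf (g ^ k) := by
        rw [orderOf_pow]
        have h1 : Nat.gcd (orderOf g) k * (orderOf g / Nat.gcd (orderOf g) k)
            = orderOf g := Nat.mul_div_cancel' (Nat.gcd_dvd_left _ _)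
        calc orderOf g = Nat.gcd (orderOf g) k * (orderOf g / Nat.gcd (orderOf g) k) :=
              h1.symm
          _ ∣ k * (orderOf g / Nat.gcd (orderOf g) k) :=
              Nat.mul_dvd_mul_right (Nat.gcd_dvd_right _ _) _
      rcases hq.dvd_mul.mp (hdvd.trans hdd) with h | h
      · exact hg q hq h
      · exact hN _ hgk q hq h
    · intro hg q hq hdvd
      refine hg q hq (hdvd.trans ?_)
      simpa using orderOf_map_dvd (QuotientGroup.mk' N) g
  have hsurj : Function.Surjective (QuotientGroup.mk : G → G ⧸ N) :=
    QuotientGroup.mk_surjective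
  have himg : (QuotientGroup.mk : G → G ⧸ N) ''
      {g : G | ∀ q : ℕ, q.Prime → q ∣ orderOf g → q ∈ π} = S := by
    rw [← hpre, Set.image_preimage_eq _ hsurj]
  refine ⟨himg, ?_⟩
  have hcard : Nat.card {g : G | ∀ q : ℕ, q.Prime → q ∣ orderOf g → q ∈ π}
      = Nat.card N * Nat.card S := by
    rw [← hpre, Nat.card_congr (QuotientGroup.preimageMkEquivSubgroupProdSet N S),
      Nat.card_prod]
  rw [hcard, Nat.mul_div_cancel_left _ Nat.card_pos]
end

section
/- Let G be a finite group, π a set of primes, N a normal π-subgroup of G, and x a π-element of G. Then |C_G(x)_π| / |G_π| ≤ |C_{G/N}(xN)_π| / |(G/N)_π|, where for any group H, H_π denotes the set of π-elements of H and C denotes centralizers. -/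
lemma pi_elt_quot_iff {G : Type*} [Group G] [Finite G] (π : Set ℕ) (N : Subgroup G) [N.Normal]
    (hN : ∀ n ∈ N, ∀ q : ℕ, q.Prime → q ∣ orderOf n → q ∈ π) (g : G) :
    (∀ q : ℕ, q.Prime → q ∣ orderOf g → q ∈ π) ↔
      (∀ q : ℕ, q.Prime → q ∣ orderOf (g : G ⧸ N) → q ∈ π) := by
  constructor
  · intro h q hq hdvd
    have hdd : orderOf (g : G ⧸ N) ∣ orderOf g := by
      apply orderOf_dvd_of_pow_eq_one
      rw [← QuotientGroup.mk_pow, pow_orderOf_eq_one]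
      rfl
    exact h q hq (hdvd.trans hdd)
  · intro h q hq hdvd
    set k := orderOf (g : G ⧸ N) with hk
    have hgk : g ^ k ∈ N := by
      rw [← QuotientGroup.eq_one_iff, QuotientGroup.mk_pow, pow_orderOf_eq_one]
    set m := orderOf (g ^ k) with hm
    have hdvd2 : orderOf g ∣ k * m := by
      apply orderOf_dvd_of_pow_eq_one
      rw [pow_mul, pow_orderOf_eq_one]
    have : q ∣ k * m := hdvd.trans hdvd2
    rcases hq.dvd_mul.mp this with h1 | h1
    · exact h q hq h1
    · exact hN (g ^ k) hgk q hq h1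

/-- For a normal `π`-subgroup `N` of a finite group `G` and a `π`-element `x`,
the proportion of `π`-elements of `G` centralizing `x` is at most the
corresponding proportion in `G/N` for `xN`. -/
theorem centralizer_pi_ratio_le_quotient {G : Type*} [Group G] [Finite G] (π : Set ℕ)
    (hπ : ∀ q ∈ π, Nat.Prime q) (N : Subgroup G) [N.Normal]
    (hN : ∀ n ∈ N, ∀ q : ℕ, q.Prime → q ∣ orderOf n → q ∈ π)
    (x : G) (hx : ∀ q : ℕ, q.Prime → q ∣ orderOf x → q ∈ π) :
    (Nat.card {y : G | Commute x y ∧ ∀ q : ℕ, q.Prime → q ∣ orderOf y → q ∈ π} : ℝ)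
        / (Nat.card {g : G | ∀ q : ℕ, q.Prime → q ∣ orderOf g → q ∈ π} : ℝ)
      ≤ (Nat.card {y : G ⧸ N |
            Commute ((x : G ⧸ N)) y ∧ ∀ q : ℕ, q.Prime → q ∣ orderOf y → q ∈ π} : ℝ)
        / (Nat.card {g : G ⧸ N | ∀ q : ℕ, q.Prime → q ∣ orderOf g → q ∈ π} : ℝ) := by
  classical
  set T : Set (G ⧸ N) := {g | ∀ q : ℕ, q.Prime → q ∣ orderOf g → q ∈ π} with hT
  set C : Set (G ⧸ N) :=
    {y | Commute ((x : G ⧸ N)) y ∧ ∀ q : ℕ, q.Prime → q ∣ orderOf y → q ∈ π} with hC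
  -- the set of π-elements of G is the preimage of T
  have hpre : {g : G | ∀ q : ℕ, q.Prime → q ∣ orderOf g → q ∈ π}
      = QuotientGroup.mk ⁻¹' T := by
    ext g
    exact pi_elt_quot_iff π N hN g
  have hcardG : Nat.card {g : G | ∀ q : ℕ, q.Prime → q ∣ orderOf g → q ∈ π}
      = Nat.card N * Nat.card T := by
    rw [hpre, Nat.card_congr (QuotientGroup.preimageMkEquivSubgroupProdSet N T),
      Nat.card_prod]
  have hsub : {y : G | Commute x y ∧ ∀ q : ℕ, q.Prime → q ∣ orderOf y → q ∈ π}
      ⊆ QuotientGroup.mk ⁻¹' C := by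
    rintro y ⟨hc, hp⟩
    refine ⟨?_, (pi_elt_quot_iff π N hN y).mp hp⟩
    have := congrArg (QuotientGroup.mk (s := N)) hc
    simpa [Commute, SemiconjBy] using this
  have hcardC : Nat.card {y : G | Commute x y ∧ ∀ q : ℕ, q.Prime → q ∣ orderOf y → q ∈ π}
      ≤ Nat.card N * Nat.card C := by
    calc Nat.card {y : G | Commute x y ∧ ∀ q : ℕ, q.Prime → q ∣ orderOf y → q ∈ π}
        ≤ Nat.card (QuotientGroup.mk ⁻¹' C : Set G) :=
          Nat.card_mono (Set.toFinite _) hsub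
      _ = Nat.card N * Nat.card C := by
          rw [Nat.card_congr (QuotientGroup.preimageMkEquivSubgroupProdSet N C),
            Nat.card_prod]
  -- positivity
  have hTpos : 0 < Nat.card T := by
    have : (1 : G ⧸ N) ∈ T := by
      intro q hq hdvd
      rw [orderOf_one, Nat.dvd_one] at hdvd
      exact absurd (hdvd ▸ hq) Nat.not_prime_one
    haveI : Nonempty T := ⟨⟨1, this⟩⟩
    exact Nat.card_pos
  have hNpos : 0 < Nat.card N := Nat.card_pos
  rw [hcardG]
  have hd : (0 : ℝ) < (Nat.card T : ℝ) := by exact_mod_cast hTpos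
  have hn : (0 : ℝ) < (Nat.card N : ℝ) := by exact_mod_cast hNpos
  have ha : (Nat.card {y : G | Commute x y ∧ ∀ q : ℕ, q.Prime → q ∣ orderOf y → q ∈ π} : ℝ)
      ≤ (Nat.card N : ℝ) * (Nat.card C : ℝ) := by exact_mod_cast hcardC
  have hcnn : (0 : ℝ) ≤ (Nat.card C : ℝ) := by positivity
  rw [Nat.cast_mul, div_le_div_iff₀ (by positivity) hd]
  calc (Nat.card {y : G | Commute x y ∧ ∀ q : ℕ, q.Prime → q ∣ orderOf y → q ∈ π} : ℝ)
        * (Nat.card T : ℝ)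
      ≤ ((Nat.card N : ℝ) * (Nat.card C : ℝ)) * (Nat.card T : ℝ) := by
        exact mul_le_mul_of_nonneg_right ha hd.le
    _ = (Nat.card C : ℝ) * ((Nat.card N : ℝ) * (Nat.card T : ℝ)) := by ring
end

section
/- Let G be a finite group, π a set of primes, and N a normal π-subgroup of G. Then Pr_π(G) ≤ Pr_π(G/N), where Pr_π(H) = |{(x,y) ∈ H_π × H_π : xy = yx}| / |H_π|² and H_π is the set of π-elements of H. -/
section Aux

variable {G : Type*} [Group G] [Finite G] {π : Set ℕ} {N : Subgroup G} [N.Normal]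

/-- If the image of `g` in `G ⧸ N` is a `π`-element and `N` is a `π`-group,
then `g` is a `π`-element. -/
lemma pi_elt_of_quotient (hN : ∀ n ∈ N, ∀ q : ℕ, q.Prime → q ∣ orderOf n → q ∈ π)
    {g : G} (hg : ∀ q : ℕ, q.Prime → q ∣ orderOf (g : G ⧸ N) → q ∈ π) :
    ∀ q : ℕ, q.Prime → q ∣ orderOf g → q ∈ π := by
  intro q hq hdvd
  set m := orderOf (g : G ⧸ N) with hm
  have hmem : g ^ m ∈ N := by
    rw [← QuotientGroup.eq_one_iff (g ^ m), QuotientGroup.mk_pow]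
    exact pow_orderOf_eq_one _
  have hdvd2 : orderOf g ∣ m * orderOf (g ^ m) := by
    apply orderOf_dvd_of_pow_eq_one
    rw [pow_mul]
    exact pow_orderOf_eq_one _
  rcases (Nat.Prime.dvd_mul hq).mp (hdvd.trans hdvd2) with h | h
  · exact hg q hq h
  · exact hN _ hmem q hq h

end Aux

/-- For a normal `π`-subgroup `N` of a finite group `G`,
the commuting probability of `π`-elements satisfies `Pr_π(G) ≤ Pr_π(G/N)`. -/
theorem pr_pi_le_quotient {G : Type*} [Group G] [Finite G] (π : Set ℕ)
    (hπ : ∀ q ∈ π, Nat.Prime q) (N : Subgroup G) [N.Normal]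
    (hN : ∀ n ∈ N, ∀ q : ℕ, q.Prime → q ∣ orderOf n → q ∈ π) :
    (Nat.card {z : G × G | (∀ q : ℕ, q.Prime → q ∣ orderOf z.1 → q ∈ π) ∧
        (∀ q : ℕ, q.Prime → q ∣ orderOf z.2 → q ∈ π) ∧ z.1 * z.2 = z.2 * z.1} : ℝ)
        / (Nat.card {g : G | ∀ q : ℕ, q.Prime → q ∣ orderOf g → q ∈ π} : ℝ) ^ 2
      ≤ (Nat.card {z : (G ⧸ N) × (G ⧸ N) | (∀ q : ℕ, q.Prime → q ∣ orderOf z.1 → q ∈ π) ∧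
            (∀ q : ℕ, q.Prime → q ∣ orderOf z.2 → q ∈ π) ∧ z.1 * z.2 = z.2 * z.1} : ℝ)
        / (Nat.card {g : G ⧸ N | ∀ q : ℕ, q.Prime → q ∣ orderOf g → q ∈ π} : ℝ) ^ 2 := by
  classical
  set SQ : Set (G ⧸ N) := {g : G ⧸ N | ∀ q : ℕ, q.Prime → q ∣ orderOf g → q ∈ π} with hSQ
  set S : Set G := {g : G | ∀ q : ℕ, q.Prime → q ∣ orderOf g → q ∈ π} with hS
  set CG : Set (G × G) := {z : G × G | (∀ q : ℕ, q.Prime → q ∣ orderOf z.1 → q ∈ π) ∧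
      (∀ q : ℕ, q.Prime → q ∣ orderOf z.2 → q ∈ π) ∧ z.1 * z.2 = z.2 * z.1} with hCG
  set CQ : Set ((G ⧸ N) × (G ⧸ N)) := {z : (G ⧸ N) × (G ⧸ N) |
      (∀ q : ℕ, q.Prime → q ∣ orderOf z.1 → q ∈ π) ∧
      (∀ q : ℕ, q.Prime → q ∣ orderOf z.2 → q ∈ π) ∧ z.1 * z.2 = z.2 * z.1} with hCQ
  -- notation for cardinalities
  set n : ℕ := Nat.card N with hn
  -- `S` is the preimage of `SQ`
  have hpre : S = (QuotientGroup.mk : G → G ⧸ N) ⁻¹' SQ := by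
    ext g
    constructor
    · intro hg q hq hdvd
      exact hg q hq (hdvd.trans (orderOf_map_dvd (QuotientGroup.mk' N) g))
    · intro hg
      exact pi_elt_of_quotient hN hg
  have hcardS : Nat.card S = n * Nat.card SQ := by
    rw [hpre, Nat.card_congr (QuotientGroup.preimageMkEquivSubgroupProdSet N SQ),
      Nat.card_prod]
  -- injection of commuting pairs
  have hout : ∀ x : G ⧸ N, (QuotientGroup.mk x.out : G ⧸ N) = x := fun x =>
    QuotientGroup.out_eq' x
  have hmemout : ∀ x : G, ((QuotientGroup.mk x : G ⧸ N).out)⁻¹ * x ∈ N := by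
    intro x
    rw [← QuotientGroup.eq]
    exact (hout _)
  have hcardC : Nat.card CG ≤ Nat.card CQ * (n * n) := by
    have hinj : ∃ f : CG → CQ × (N × N), Function.Injective f := by
      refine ⟨fun z => ⟨⟨((z.1.1 : G ⧸ N), (z.1.2 : G ⧸ N)), ?_⟩,
        ⟨((QuotientGroup.mk z.1.1 : G ⧸ N).out)⁻¹ * z.1.1, hmemout _⟩,
        ⟨((QuotientGroup.mk z.1.2 : G ⧸ N).out)⁻¹ * z.1.2, hmemout _⟩⟩, ?_⟩
      · obtain ⟨h1, h2, h3⟩ := z.2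
        refine ⟨fun q hq hd => h1 q hq (hd.trans (orderOf_map_dvd (QuotientGroup.mk' N) _)),
          fun q hq hd => h2 q hq (hd.trans (orderOf_map_dvd (QuotientGroup.mk' N) _)), ?_⟩
        show ((z.1.1 * z.1.2 : G) : G ⧸ N) = ((z.1.2 * z.1.1 : G) : G ⧸ N)
        rw [h3]
      · intro a b hab
        simp only [Prod.mk.injEq, Subtype.mk.injEq] at hab
        obtain ⟨⟨e1, e2⟩, e3, e4⟩ := hab
        apply Subtype.ext
        have k1 : a.1.1 = b.1.1 := by
          have := e3
          rw [e1] at this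
          exact mul_left_cancel this
        have k2 : a.1.2 = b.1.2 := by
          have := e4
          rw [e2] at this
          exact mul_left_cancel this
        exact Prod.ext k1 k2
    obtain ⟨f, hf⟩ := hinj
    calc Nat.card CG ≤ Nat.card (CQ × (N × N)) := Nat.card_le_card_of_injective f hf
      _ = Nat.card CQ * (n * n) := by rw [Nat.card_prod, Nat.card_prod]
  -- positivity
  have hnpos : 0 < n := Nat.card_pos
  have hSQpos : 0 < Nat.card SQ := by
    have : (1 : G ⧸ N) ∈ SQ := by
      intro q hq hdvd
      simp [orderOf_one] at hdvd
      simp [hdvd] at hq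
      exact absurd hq Nat.not_prime_one
    have : Nonempty SQ := ⟨⟨1, this⟩⟩
    exact Nat.card_pos
  -- arithmetic
  rw [hcardS]
  have hCQnn : (0:ℝ) ≤ Nat.card CQ := by positivity
  have hsq : (0:ℝ) < (Nat.card SQ : ℝ) := by exact_mod_cast hSQpos
  have hnr : (0:ℝ) < (n : ℝ) := by exact_mod_cast hnpos
  rw [div_le_div_iff₀ (by positivity) (by positivity)]
  have hC : (Nat.card CG : ℝ) ≤ (Nat.card CQ : ℝ) * (n * n) := by exact_mod_cast hcardC
  push_cast
  nlinarith [sq_nonneg ((Nat.card SQ : ℝ)), sq_nonneg ((n : ℝ))]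
end

section
/- Let G be a finite group, x, y ∈ G, and K ≤ G a subgroup normalized by both x and y, such that Kx = Ky (as cosets) and gcd(|K|, o(x)) = 1 = gcd(|K|, o(y)), where o denotes element order. Then x = y^k for some k ∈ K. -/
open Subgroup Pointwise

universe u

private lemma eq_one_of_mem_of_dvd' {G : Type u} [Group G] [Finite G] {K : Subgroup G} {w : G}
    {d : ℕ} (hw : w ∈ K) (hd : orderOf w ∣ d) (hcop : Nat.Coprime (Nat.card K) d) : w = 1 := by
  have h1 : orderOf w ∣ Nat.card K := K.orderOf_dvd_natCard hw
  have h2 : orderOf w ∣ Nat.gcd (Nat.card K) d := Nat.dvd_gcd h1 hd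
  rw [Nat.coprime_iff_gcd_eq_one.mp hcop] at h2
  exact orderOf_eq_one_iff.mp (Nat.dvd_one.mp h2)

private lemma orderOf_mk'_eq' {G : Type u} [Group G] [Finite G] (K : Subgroup G) [K.Normal] (x : G)
    (h : Nat.Coprime (Nat.card K) (orderOf x)) :
    orderOf (QuotientGroup.mk' K x) = orderOf x := by
  have hd : orderOf (QuotientGroup.mk' K x) ∣ orderOf x := orderOf_map_dvd _ x
  refine Nat.dvd_antisymm hd ?_
  have hxd : x ^ orderOf ((QuotientGroup.mk' K) x) ∈ K := by
    have : ((QuotientGroup.mk' K) (x ^ orderOf ((QuotientGroup.mk' K) x))) = 1 := by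
      rw [map_pow]; exact pow_orderOf_eq_one _
    exact (QuotientGroup.eq_one_iff _).mp this
  exact orderOf_dvd_of_pow_eq_one (eq_one_of_mem_of_dvd' hxd (orderOf_pow_dvd _) h)

set_option maxHeartbeats 1000000 in
private theorem aux : ∀ (m : ℕ) {G : Type u} [Group G] [Finite G] (K : Subgroup G) (x y : G),
    Nat.card K * orderOf x + Nat.card G ≤ m →
    (∀ k ∈ K, x * k * x⁻¹ ∈ K) → x * y⁻¹ ∈ K →
    Nat.Coprime (Nat.card K) (orderOf x) → Nat.Coprime (Nat.card K) (orderOf y) →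
    ∃ k ∈ K, x = k⁻¹ * y * k := by
  intro m
  induction m using Nat.strong_induction_on with
  | _ m IH =>
  intro G _ _ K x y hm hx hxy hox hoy
  rcases eq_or_ne (orderOf x) 1 with hn1 | hn1
  · -- trivial case x = 1
    have hx1 : x = 1 := orderOf_eq_one_iff.mp hn1
    have hyK : y ∈ K := by
      have h1 : (x * y⁻¹)⁻¹ ∈ K := inv_mem hxy
      rw [hx1, one_mul, inv_inv] at h1
      exact h1
    have hy1 : y = 1 := eq_one_of_mem_of_dvd' hyK dvd_rfl hoy
    exact ⟨1, K.one_mem, by simp [hx1, hy1]⟩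
  have hnpos : 0 < orderOf x := (isOfFinOrder_of_finite x).orderOf_pos
  set H := K ⊔ zpowers x with hHdef
  have hxH : x ∈ H := (le_sup_right : zpowers x ≤ H) (mem_zpowers x)
  have hKH : K ≤ H := le_sup_left
  have hyH : y ∈ H := by
    have h1 : (x * y⁻¹)⁻¹ * x ∈ H := mul_mem (inv_mem (hKH hxy)) hxH
    have h2 : (x * y⁻¹)⁻¹ * x = y := by group
    rwa [h2] at h1
  by_cases hHtop : H = ⊤
  swap
  · -- restrict to the subgroup H
    set x' : H := ⟨x, hxH⟩
    set y' : H := ⟨y, hyH⟩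
    set K' := K.subgroupOf H with hK'def
    have hcardK' : Nat.card K' = Nat.card K :=
      Nat.card_congr (subgroupOfEquivOfLe hKH).toEquiv
    have hordx' : orderOf x' = orderOf x := Subgroup.orderOf_mk x hxH
    have hordy' : orderOf y' = orderOf y := Subgroup.orderOf_mk y hyH
    have hcardH : Nat.card H < Nat.card G := by
      have hle : Nat.card H ≤ Nat.card G := by
        have := Subgroup.card_le_of_le (le_top : H ≤ ⊤)
        rwa [Subgroup.card_top] at this
      rcases lt_or_eq_of_le hle with h | h
      · exact h
      · exact absurd (Subgroup.eq_top_of_card_eq H h) hHtop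
    obtain ⟨k', hk', heq⟩ := IH (Nat.card K' * orderOf x' + Nat.card H)
      (by rw [hcardK', hordx']; omega) K' x' y' le_rfl
      (by
        intro j hj
        rw [Subgroup.mem_subgroupOf] at hj ⊢
        simpa using hx _ hj)
      (by rw [Subgroup.mem_subgroupOf]; simpa using hxy)
      (by rw [hcardK', hordx']; exact hox)
      (by rw [hcardK', hordy']; exact hoy)
    refine ⟨(k' : G), (Subgroup.mem_subgroupOf).mp hk', ?_⟩
    have := congrArg (Subtype.val) heq
    simpa using this
  -- now H = ⊤, so K is normal in G
  have hxnorm : x ∈ normalizer (K : Set G) := Subgroup.mem_normalizer_fintype fun j hj => hx j hj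
  haveI hKnorm : K.Normal := by
    rw [← Subgroup.normalizer_eq_top_iff]
    have h1 : H ≤ normalizer (K : Set G) := sup_le Subgroup.le_normalizer (zpowers_le.mpr hxnorm)
    rw [hHtop] at h1
    exact top_le_iff.mp h1
  set π := QuotientGroup.mk' K with hπdef
  have hπxy : π x = π y := by
    have h1 : x⁻¹ * y ∈ K := by
      have h2 : (x * y⁻¹)⁻¹ ∈ K := inv_mem hxy
      have h3 : x⁻¹ * (x * y⁻¹)⁻¹ * x⁻¹⁻¹ ∈ K := hKnorm.conj_mem _ h2 x⁻¹
      have h4 : x⁻¹ * (x * y⁻¹)⁻¹ * x⁻¹⁻¹ = x⁻¹ * y := by group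
      rwa [h4] at h3
    exact (QuotientGroup.mk'_eq_mk' K).mpr ⟨x⁻¹ * y, h1, by group⟩
  have hordπx : orderOf (π x) = orderOf x := orderOf_mk'_eq' K x hox
  have hordy : orderOf y = orderOf x := by
    rw [← orderOf_mk'_eq' K y hoy, ← hπxy, hordπx]
  set n := orderOf x with hndef
  set p := n.minFac with hpdef
  have pp : p.Prime := Nat.minFac_prime hn1
  have hpn : p ∣ n := Nat.minFac_dvd n
  have hgcd : Nat.gcd n (n / p) = n / p := Nat.gcd_eq_right (Nat.div_dvd_of_dvd hpn)
  have hordxp : orderOf (x ^ (n / p)) = p := by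
    rw [orderOf_pow, ← hndef, hgcd, Nat.div_div_self hpn hnpos.ne']
  have hordyp : orderOf (y ^ (n / p)) = p := by
    rw [orderOf_pow, hordy, hgcd, Nat.div_div_self hpn hnpos.ne']
  have hpK : ¬ p ∣ Nat.card K := by
    intro h
    have h1 : p ∣ Nat.gcd (Nat.card K) n := Nat.dvd_gcd h hpn
    rw [Nat.coprime_iff_gcd_eq_one.mp hox] at h1
    exact pp.one_lt.ne' (Nat.dvd_one.mp h1)
  set P := zpowers (x ^ (n / p)) with hPdef
  have hcardP : Nat.card P = p := by rw [Nat.card_zpowers, hordxp]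
  set M := K ⊔ P with hMdef
  have hKM : K ≤ M := le_sup_left
  have hPM : P ≤ M := le_sup_right
  have hxpM : (x ^ (n / p)) ∈ M := hPM (mem_zpowers _)
  have hypxpK : y ^ (n / p) * (x ^ (n / p))⁻¹ ∈ K := by
    have h1 : π (y ^ (n / p) * (x ^ (n / p))⁻¹) = 1 := by
      rw [map_mul, map_inv, map_pow, map_pow, hπxy]
      simp
    exact (QuotientGroup.eq_one_iff _).mp h1
  have hypM : y ^ (n / p) ∈ M := by
    have h1 : y ^ (n / p) = (y ^ (n / p) * (x ^ (n / p))⁻¹) * x ^ (n / p) := by group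
    rw [h1]
    exact mul_mem (hKM hypxpK) hxpM
  -- the order of M divides |K| * p
  have hMdvd : Nat.card M ∣ Nat.card K * p := by
    set K'' := K.subgroupOf M with hK''def
    haveI : K''.Normal := hKnorm.subgroupOf M
    have h1 : Nat.card M = Nat.card (↥M ⧸ K'') * Nat.card K'' :=
      Subgroup.card_eq_card_quotient_mul_card_subgroup K''
    have h2 : Nat.card K'' = Nat.card K := Nat.card_congr (subgroupOfEquivOfLe hKM).toEquiv
    have h3 : Nat.card (↥M ⧸ K'') ∣ p := by
      have hsurj : Function.Surjective
          ((QuotientGroup.mk' K'').comp (Subgroup.inclusion hPM)) := by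
        intro q
        obtain ⟨w, rfl⟩ := QuotientGroup.mk'_surjective K'' q
        have hw : (w : G) ∈ ((K : Set G) * (P : Set G)) := by
          rw [← Subgroup.normal_mul]
          exact SetLike.mem_coe.mpr w.2
        obtain ⟨a, ha, t, ht, hat⟩ := Set.mem_mul.mp hw
        refine ⟨⟨t, ht⟩, ?_⟩
        have hmem : ((Subgroup.inclusion hPM) ⟨t, ht⟩)⁻¹ * w ∈ K'' := by
          rw [Subgroup.mem_subgroupOf]
          have h5 : ((((Subgroup.inclusion hPM) ⟨t, ht⟩)⁻¹ * w : M) : G) = t⁻¹ * (a * t) := by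
            simp [Subgroup.coe_inclusion, ← hat]
          rw [h5]
          have h6 : t⁻¹ * (a * t) = t⁻¹ * a * t⁻¹⁻¹ := by group
          rw [h6]
          exact hKnorm.conj_mem _ ha t⁻¹
        exact (QuotientGroup.mk'_eq_mk' K'').mpr
          ⟨_, hmem, by group⟩
      have h4 := Subgroup.card_dvd_of_surjective _ hsurj
      calc Nat.card (↥M ⧸ K'') ∣ Nat.card P := h4
        _ = p := hcardP
    calc Nat.card M = Nat.card (↥M ⧸ K'') * Nat.card K'' := h1
      _ ∣ p * Nat.card K := Nat.mul_dvd_mul h3 (h2 ▸ dvd_rfl)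
      _ = Nat.card K * p := Nat.mul_comm _ _
  haveI fp : Fact p.Prime := ⟨pp⟩
  -- any p-subgroup of M containing a subgroup of order p equals it
  have hmax : ∀ (R Q : Subgroup ↥M), Nat.card R = p → IsPGroup p Q → R ≤ Q → Q = R := by
    intro R Q hR hQ hle
    obtain ⟨j, hj⟩ := IsPGroup.iff_card.mp hQ
    have h1 : Nat.card Q ∣ Nat.card K * p := (Subgroup.card_subgroup_dvd_card Q).trans hMdvd
    have hj1 : j ≤ 1 := by
      by_contra hcon
      have h2 : p * p ∣ Nat.card Q := by
        rw [hj]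
        calc p * p = p ^ 2 := (sq p).symm
          _ ∣ p ^ j := pow_dvd_pow p (by omega)
      have h4 : p ∣ Nat.card K := (Nat.mul_dvd_mul_iff_right pp.pos).mp (h2.trans h1)
      exact hpK h4
    have h5 : Nat.card Q ≤ p := by
      rw [hj]
      interval_cases j
      · simpa using pp.one_lt.le
      · simp
    exact (Subgroup.eq_of_le_of_card_ge hle (by rw [hR]; exact h5)).symm
  have hcardPx : Nat.card (P.subgroupOf M) = p := by
    rw [Nat.card_congr (subgroupOfEquivOfLe hPM).toEquiv, hcardP]
  have hPyM : zpowers (y ^ (n / p)) ≤ M := zpowers_le.mpr hypM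
  have hcardPy : Nat.card ((zpowers (y ^ (n / p))).subgroupOf M) = p := by
    rw [Nat.card_congr (subgroupOfEquivOfLe hPyM).toEquiv, Nat.card_zpowers, hordyp]
  set Sx : Sylow p ↥M := ⟨P.subgroupOf M, IsPGroup.of_card (by rw [hcardPx, pow_one]),
    fun {Q} hQ hle => hmax _ Q hcardPx hQ hle⟩ with hSxdef
  set Sy : Sylow p ↥M := ⟨(zpowers (y ^ (n / p))).subgroupOf M,
    IsPGroup.of_card (by rw [hcardPy, pow_one]),
    fun {Q} hQ hle => hmax _ Q hcardPy hQ hle⟩ with hSydef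
  obtain ⟨g, hg⟩ := MulAction.exists_smul_eq (↥M) Sy Sx
  have hconj : (MulAut.conj g • (Sy : Subgroup ↥M)) = (Sx : Subgroup ↥M) := by
    rw [← hg]; rfl
  have hypSy : (⟨y ^ (n / p), hypM⟩ : ↥M) ∈ (Sy : Subgroup ↥M) :=
    Subgroup.mem_subgroupOf.mpr (mem_zpowers _)
  have hmem1 : MulAut.conj g • (⟨y ^ (n / p), hypM⟩ : ↥M) ∈ (Sx : Subgroup ↥M) := by
    rw [← hconj]
    exact Subgroup.smul_mem_pointwise_smul _ _ _ hypSy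
  have hmem2 : (g : G) * y ^ (n / p) * (g : G)⁻¹ ∈ P := by
    have h1 := Subgroup.mem_subgroupOf.mp hmem1
    simpa [MulAut.smul_def, MulAut.conj_apply] using h1
  have hgM : (g : G) ∈ ((P : Set G) * (K : Set G)) := by
    rw [← Subgroup.mul_normal]
    have h1 : (g : G) ∈ K ⊔ P := g.2
    have h2 : K ⊔ P = P ⊔ K := sup_comm _ _
    rw [h2] at h1
    exact SetLike.mem_coe.mpr h1
  obtain ⟨t, ht, k, hk, htk⟩ := Set.mem_mul.mp hgM
  have hkyp : k * y ^ (n / p) * k⁻¹ ∈ P := by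
    have h1 : t⁻¹ * ((g : G) * y ^ (n / p) * (g : G)⁻¹) * t ∈ P :=
      mul_mem (mul_mem (inv_mem ht) hmem2) ht
    have h2 : t⁻¹ * ((g : G) * y ^ (n / p) * (g : G)⁻¹) * t = k * y ^ (n / p) * k⁻¹ := by
      rw [← htk]; group
    rwa [h2] at h1
  set y₂ := k * y * k⁻¹ with hy₂def
  have hordy₂ : orderOf y₂ = n := by
    have h1 := orderOf_injective (MulAut.conj k).toMonoidHom (MulAut.conj k).injective y
    simp only [MulEquiv.coe_toMonoidHom, MulAut.conj_apply] at h1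
    rw [hy₂def, h1, hordy]
  have hy₂pow : y₂ ^ (n / p) = k * y ^ (n / p) * k⁻¹ := by rw [hy₂def, conj_pow]
  have hordy₂p : orderOf (y₂ ^ (n / p)) = p := by
    rw [orderOf_pow, hordy₂, hgcd, Nat.div_div_self hpn hnpos.ne']
  have hPy₂ : zpowers (y₂ ^ (n / p)) = P := by
    have hle : zpowers (y₂ ^ (n / p)) ≤ P := zpowers_le.mpr (hy₂pow ▸ hkyp)
    refine Subgroup.eq_of_le_of_card_ge hle ?_
    rw [hcardP, Nat.card_zpowers, hordy₂p]
  have hk1 : π k = 1 := (QuotientGroup.eq_one_iff k).mpr hk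
  have hxy₂ : x * y₂⁻¹ ∈ K := by
    have h1 : π (x * y₂⁻¹) = 1 := by
      simp [hy₂def, map_mul, map_inv, hk1, hπxy]
    exact (QuotientGroup.eq_one_iff _).mp h1
  have hnormmem : ∀ (z w : G), Commute z w → z ∈ normalizer (zpowers w : Set G) := by
    intro z w hc
    apply Subgroup.mem_normalizer_fintype
    intro u hu
    obtain ⟨j, rfl⟩ := mem_zpowers_iff.mp hu
    have hc2 : Commute z (w ^ j) := hc.zpow_right j
    have h3 : z * w ^ j * z⁻¹ = w ^ j := by rw [hc2.eq]; group
    rw [h3]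
    exact mem_zpowers_iff.mpr ⟨j, rfl⟩
  set N := normalizer (P : Set G) with hNdef
  have hxN : x ∈ N := hnormmem x _ (Commute.pow_right (Commute.refl x) _)
  have hy₂N : y₂ ∈ N := by
    rw [hNdef, ← hPy₂]
    exact hnormmem y₂ _ (Commute.pow_right (Commute.refl y₂) _)
  by_cases hNtop : N = ⊤
  swap
  · -- pass to K ⊓ N, which is strictly smaller than K
    have hKN : ¬ K ≤ N := by
      intro h
      apply hNtop
      rw [eq_top_iff, ← hHtop, hHdef]
      exact sup_le h (zpowers_le.mpr hxN)
    set K₁ := K ⊓ N with hK₁def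
    have hK₁K : K₁ ≤ K := inf_le_left
    have hlt : Nat.card K₁ < Nat.card K := by
      rcases lt_or_eq_of_le (Subgroup.card_le_of_le hK₁K) with h | h
      · exact h
      · exact absurd (inf_eq_left.mp (Subgroup.eq_of_le_of_card_ge hK₁K h.ge)) hKN
    have hdvd1 : Nat.card K₁ ∣ Nat.card K := Subgroup.card_dvd_of_le hK₁K
    obtain ⟨c, hc, hceq⟩ := IH (Nat.card K₁ * n + Nat.card G)
      (by
        have h9 : Nat.card K₁ * n < Nat.card K * n := mul_lt_mul_of_pos_right hlt hnpos
        omega)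
      K₁ x y₂ le_rfl
      (by
        intro j hj
        rw [Subgroup.mem_inf] at hj ⊢
        exact ⟨hKnorm.conj_mem _ hj.1 x, mul_mem (mul_mem hxN hj.2) (inv_mem hxN)⟩)
      (Subgroup.mem_inf.mpr ⟨hxy₂, mul_mem hxN (inv_mem hy₂N)⟩)
      (Nat.Coprime.coprime_dvd_left hdvd1 hox)
      (by rw [hordy₂]; exact Nat.Coprime.coprime_dvd_left hdvd1 hox)
    refine ⟨k⁻¹ * c, mul_mem (inv_mem hk) (hK₁K hc), ?_⟩
    have h4 : (k⁻¹ * c)⁻¹ * y * (k⁻¹ * c) = c⁻¹ * y₂ * c := by rw [hy₂def]; group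
    rw [h4]
    exact hceq
  -- now P is normal in G; pass to the quotient G ⧸ P
  haveI hPnorm : P.Normal := Subgroup.normalizer_eq_top_iff.mp hNtop
  set π₂ := QuotientGroup.mk' P with hπ₂def
  set K₂ := K.map π₂ with hK₂def
  have hcardK₂ : Nat.card K₂ ∣ Nat.card K := by
    have hsurj : Function.Surjective
        (MonoidHom.codRestrict (π₂.comp K.subtype) K₂
          (fun w => Subgroup.mem_map_of_mem _ w.2)) := by
      rintro ⟨q, hq⟩
      obtain ⟨w, hw, rfl⟩ := hq
      exact ⟨⟨w, hw⟩, rfl⟩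
    exact Subgroup.card_dvd_of_surjective _ hsurj
  have hordπ₂x : orderOf (π₂ x) ∣ n := orderOf_map_dvd π₂ x
  have hordπ₂y₂ : orderOf (π₂ y₂) ∣ n := hordy₂ ▸ orderOf_map_dvd π₂ y₂
  have hcardQlt : Nat.card (G ⧸ P) < Nat.card G := by
    have h1 : Nat.card G = Nat.card (G ⧸ P) * Nat.card P :=
      Subgroup.card_eq_card_quotient_mul_card_subgroup P
    have h2 : 0 < Nat.card (G ⧸ P) := Nat.card_pos
    have h3 := pp.one_lt
    rw [h1, hcardP]
    nlinarith
  have hKpos : 0 < Nat.card K := Nat.card_pos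
  obtain ⟨cbar, hcbar, heq2⟩ := IH (Nat.card K₂ * orderOf (π₂ x) + Nat.card (G ⧸ P))
    (by
      have h1 : Nat.card K₂ * orderOf (π₂ x) ≤ Nat.card K * n :=
        Nat.mul_le_mul (Nat.le_of_dvd hKpos hcardK₂) (Nat.le_of_dvd hnpos hordπ₂x)
      omega)
    K₂ (π₂ x) (π₂ y₂) le_rfl
    (by
      rintro j hj
      obtain ⟨w, hw, rfl⟩ := hj
      have h1 : π₂ x * π₂ w * (π₂ x)⁻¹ = π₂ (x * w * x⁻¹) := by
        rw [map_mul, map_mul, map_inv]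
      rw [h1]
      exact Subgroup.mem_map_of_mem _ (hKnorm.conj_mem _ hw x))
    (by
      have h1 : π₂ (x * y₂⁻¹) ∈ K₂ := Subgroup.mem_map_of_mem _ hxy₂
      simpa [map_mul, map_inv] using h1)
    (Nat.Coprime.coprime_dvd_left hcardK₂ (Nat.Coprime.coprime_dvd_right hordπ₂x hox))
    (Nat.Coprime.coprime_dvd_left hcardK₂ (Nat.Coprime.coprime_dvd_right hordπ₂y₂ hox))
  obtain ⟨c, hcK, rfl⟩ := hcbar
  have hc1 : π c = 1 := (QuotientGroup.eq_one_iff c).mpr hcK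
  have hwP : x * (c⁻¹ * y₂ * c)⁻¹ ∈ P := by
    have h1 : π₂ (x * (c⁻¹ * y₂ * c)⁻¹) = 1 := by
      rw [map_mul, map_inv, map_mul, map_mul, map_inv, ← heq2]
      simp
    exact (QuotientGroup.eq_one_iff _).mp h1
  have hwK : x * (c⁻¹ * y₂ * c)⁻¹ ∈ K := by
    have h1 : π (x * (c⁻¹ * y₂ * c)⁻¹) = 1 := by
      simp [hy₂def, map_mul, map_inv, hk1, hc1, hπxy]
    exact (QuotientGroup.eq_one_iff _).mp h1
  have hw1 : x * (c⁻¹ * y₂ * c)⁻¹ = 1 := eq_one_of_mem_of_dvd' hwK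
    ((P.orderOf_dvd_natCard hwP).trans (hcardP ▸ hpn)) hox
  have h2 : x = c⁻¹ * y₂ * c := mul_inv_eq_one.mp hw1
  refine ⟨k⁻¹ * c, mul_mem (inv_mem hk) hcK, ?_⟩
  have h4 : (k⁻¹ * c)⁻¹ * y * (k⁻¹ * c) = c⁻¹ * y₂ * c := by rw [hy₂def]; group
  rw [h4]
  exact h2

/-- If `x, y` normalize `K ≤ G`, the cosets `Kx` and `Ky` coincide, and the
orders of `x` and `y` are coprime to `|K|`, then `x = y^k` for some `k ∈ K`. -/
theorem coset_coprime_conjugate {G : Type*} [Group G] [Finite G] (K : Subgroup G) (x y : G)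
    (hx : ∀ k ∈ K, x * k * x⁻¹ ∈ K) (hy : ∀ k ∈ K, y * k * y⁻¹ ∈ K)
    (hcoset : (fun k => k * x) '' (K : Set G) = (fun k => k * y) '' (K : Set G))
    (hox : Nat.Coprime (Nat.card K) (orderOf x))
    (hoy : Nat.Coprime (Nat.card K) (orderOf y)) :
    ∃ k ∈ K, x = k⁻¹ * y * k := by
  have hxy : x * y⁻¹ ∈ K := by
    have h1 : x ∈ (fun k => k * x) '' (K : Set G) := ⟨1, K.one_mem, one_mul x⟩
    rw [hcoset] at h1
    obtain ⟨k, hk, hkx⟩ := h1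
    have h2 : x * y⁻¹ = k := by rw [← hkx]; group
    rw [h2]; exact hk
  exact aux (Nat.card K * orderOf x + Nat.card G) K x y le_rfl hx hxy hox hoy
end

section
/- Let G be a finite group, π a set of primes, y ∈ G a π-element, and K ≤ G a π'-subgroup of G normalized by y (i.e., |K| is divisible by no prime in π). Then the K-conjugacy class y^K = {y^k : k ∈ K} equals the set of π-elements of the coset Ky. -/
open Subgroup

section Helpers


variable {G : Type*} [Group G]

private lemma conjMap_conjMap (g h : G) (H : Subgroup G) :
    (H.map (MulAut.conj h).toMonoidHom).map (MulAut.conj g).toMonoidHom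
      = H.map (MulAut.conj (g * h)).toMonoidHom := by
  rw [Subgroup.map_map]
  congr 1
  ext x
  simp [mul_assoc]

private lemma map_conjMap_comm {G' : Type*} [Group G'] (f : G →* G') (g : G) (H : Subgroup G) :
    (H.map (MulAut.conj g).toMonoidHom).map f
      = (H.map f).map (MulAut.conj (f g)).toMonoidHom := by
  rw [Subgroup.map_map, Subgroup.map_map]
  congr 1
  ext x
  simp

private lemma conjMap_normal (g : G) (H : Subgroup G) [h : H.Normal] :
    H.map (MulAut.conj g).toMonoidHom = H := by
  apply le_antisymm
  · rintro x ⟨a, ha, rfl⟩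
    exact h.conj_mem a ha g
  · intro x hx
    refine ⟨g⁻¹ * x * g, by simpa using h.conj_mem x hx g⁻¹, ?_⟩
    simp [MulAut.conj_apply, mul_assoc]

private lemma conjMap_inf (g : G) (H K : Subgroup G) :
    (H ⊓ K).map (MulAut.conj g).toMonoidHom
      = H.map (MulAut.conj g).toMonoidHom ⊓ K.map (MulAut.conj g).toMonoidHom :=
  Subgroup.map_inf _ _ _ (MulAut.conj g).injective

open Pointwise in
private lemma smul_eq_conjMap (a : MulAut G) (H : Subgroup G) :
    a • H = H.map a.toMonoidHom := rfl

private lemma isCyclic_zpowers (g : G) : IsCyclic (zpowers g) := by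
  refine ⟨⟨g, mem_zpowers g⟩, fun x => ?_⟩
  obtain ⟨x, hx⟩ := x
  obtain ⟨n, rfl⟩ := hx
  exact ⟨n, by ext; simp⟩

private lemma coprime_of_no_common_prime {a b : ℕ}
    (h : ∀ p : ℕ, p.Prime → p ∣ a → ¬p ∣ b) : Nat.Coprime a b := by
  by_contra hc
  obtain ⟨p, hp, hpd⟩ := Nat.exists_prime_and_dvd hc
  exact h p hp (hpd.trans (Nat.gcd_dvd_left a b)) (hpd.trans (Nat.gcd_dvd_right a b))

private lemma card_subgroupOf_le (K M : Subgroup G) :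
    Nat.card (K.subgroupOf M) = Nat.card (K ⊓ M : Subgroup G) := by
  rw [← inf_subgroupOf_right]
  exact Nat.card_congr (subgroupOfEquivOfLe inf_le_right).toEquiv

private lemma isComplement'_subgroupOf_left {K H L : Subgroup G}
    (hc : K.IsComplement' H) (hKL : K ≤ L) :
    (K.subgroupOf L).IsComplement' ((H ⊓ L).subgroupOf L) := by
  apply isComplement'_of_disjoint_and_mul_eq_univ
  · rw [disjoint_def]
    rintro x hx1 hx2
    have : (x : G) ∈ K ⊓ H := ⟨hx1, (mem_subgroupOf.mp hx2).1⟩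
    rw [hc.disjoint.eq_bot] at this
    exact Subtype.ext (by simpa using this)
  · rw [Set.eq_univ_iff_forall]
    intro l
    obtain ⟨⟨k, h⟩, hg⟩ := hc.existsUnique (l : G) |>.exists
    have hkL : (k : G) ∈ L := hKL k.2
    have hhL : (h : G) ∈ L := by
      have : (h : G) = (k : G)⁻¹ * l := by rw [← hg]; group
      rw [this]; exact mul_mem (inv_mem hkL) l.2
    exact ⟨⟨(k : G), hkL⟩, mem_subgroupOf.mpr k.2,
      ⟨(h : G), hhL⟩, mem_subgroupOf.mpr ⟨h.2, hhL⟩, Subtype.ext hg⟩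

private lemma isComplement'_subgroupOf_right {K H M : Subgroup G}
    (hc : K.IsComplement' H) (hHM : H ≤ M) :
    (K.subgroupOf M).IsComplement' (H.subgroupOf M) := by
  apply isComplement'_of_disjoint_and_mul_eq_univ
  · rw [disjoint_def]
    rintro x hx1 hx2
    have : (x : G) ∈ K ⊓ H := ⟨hx1, hx2⟩
    rw [hc.disjoint.eq_bot] at this
    exact Subtype.ext (by simpa using this)
  · rw [Set.eq_univ_iff_forall]
    intro m
    obtain ⟨⟨k, h⟩, hg⟩ := hc.existsUnique (m : G) |>.exists
    have hhM : (h : G) ∈ M := hHM h.2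
    have hkM : (k : G) ∈ M := by
      have : (k : G) = (m : G) * (h : G)⁻¹ := by rw [← hg]; group
      rw [this]; exact mul_mem m.2 (inv_mem hhM)
    exact ⟨⟨(k : G), hkM⟩, mem_subgroupOf.mpr k.2,
      ⟨(h : G), hhM⟩, mem_subgroupOf.mpr h.2, Subtype.ext hg⟩

private lemma card_lt_of_ne_top [Finite G] {M : Subgroup G} (h : M ≠ ⊤) :
    Nat.card M < Nat.card G :=
  lt_of_le_of_ne M.card_le_card_group fun he => h (eq_top_of_card_eq M he)

private lemma le_normalizer_inf {B L : Subgroup G} (hLn : L.Normal) :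
    B ≤ Subgroup.normalizer ((B ⊓ L : Subgroup G) : Set G) := by
  intro b hb
  rw [mem_normalizer_iff]
  intro h
  simp only [Subgroup.mem_inf]
  constructor
  · rintro ⟨hB, hL⟩
    exact ⟨B.mul_mem (B.mul_mem hb hB) (B.inv_mem hb), hLn.conj_mem h hL b⟩
  · rintro ⟨hB, hL⟩
    have h1 : h = b⁻¹ * (b * h * b⁻¹) * b := by group
    rw [h1]
    exact ⟨B.mul_mem (B.mul_mem (B.inv_mem hb) hB) hb,
      by simpa using hLn.conj_mem _ hL b⁻¹⟩

end Helpers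

universe u

private theorem SZ_cyclic : ∀ (n : ℕ) (G : Type u) [Group G] [Finite G],
    Nat.card G ≤ n → ∀ (K H₁ H₂ : Subgroup G) [K.Normal],
    K.IsComplement' H₁ → K.IsComplement' H₂ →
    Nat.Coprime (Nat.card K) K.index → IsCyclic (G ⧸ K) →
    ∃ g : G, H₁.map (MulAut.conj g).toMonoidHom = H₂ := by
  intro n
  induction n with
  | zero =>
    intro G _ _ hcard
    exact absurd (Nat.card_pos (α := G)) (by omega)
  | succ n ih =>
    intro G _ _ hcard K H₁ H₂ hKn hc₁ hc₂ hcop hcyc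
    by_cases hKtop : K = ⊤
    · subst hKtop
      rw [isComplement'_top_left] at hc₁ hc₂
      exact ⟨1, by rw [hc₁, hc₂, Subgroup.map_bot]⟩
    -- pick a prime dividing the index
    have hKne : K.index ≠ 1 := fun h => hKtop (index_eq_one.mp h)
    obtain ⟨p, hp, hpdvd⟩ := Nat.exists_prime_and_dvd hKne
    haveI : Fact p.Prime := ⟨hp⟩
    have hpK : ¬ p ∣ Nat.card K := fun h =>
      absurd (Nat.dvd_one.mp (hcop ▸ Nat.dvd_gcd h hpdvd)) hp.one_lt.ne'
    -- subgroup of order p in the cyclic quotient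
    obtain ⟨u, hu⟩ := exists_prime_orderOf_dvd_card' (G := G ⧸ K) p
      (by rwa [← index_eq_card])
    set Q : Subgroup (G ⧸ K) := zpowers u with hQdef
    have hQcard : Nat.card Q = p := by rw [Nat.card_zpowers, hu]
    haveI hQn : Q.Normal := by
      constructor
      intro x hx g
      obtain ⟨s, hs⟩ := hcyc.exists_generator
      obtain ⟨i, rfl⟩ := hs g
      obtain ⟨j, rfl⟩ := hs x
      have he : s ^ i * s ^ j * (s ^ i)⁻¹ = s ^ j := by group
      rw [he]; exact hx
    set L : Subgroup G := Q.comap (QuotientGroup.mk' K) with hLdef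
    have hKL : K ≤ L := by
      intro k hk
      have h1 : QuotientGroup.mk' K k = 1 := (QuotientGroup.eq_one_iff k).mpr hk
      exact mem_comap.mpr (by rw [h1]; exact Q.one_mem)
    haveI hLn : L.Normal := hQn.comap _
    -- cardinalities
    have hcL1 := isComplement'_subgroupOf_left hc₁ hKL
    have hcL2 := isComplement'_subgroupOf_left hc₂ hKL
    have hKLcard : Nat.card (K.subgroupOf L) = Nat.card K :=
      Nat.card_congr (subgroupOfEquivOfLe hKL).toEquiv
    have hinter : ∀ (H : Subgroup G), K.IsComplement' H →
        Nat.card ((H ⊓ L : Subgroup G)) = p := by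
      intro H hc
      rw [← hQcard]
      apply Nat.card_eq_of_bijective
        (fun x : ↥(H ⊓ L) => (⟨QuotientGroup.mk' K x, (mem_comap.mp x.2.2 : _)⟩ : ↥Q))
      constructor
      · rintro ⟨a, haH, haL⟩ ⟨b, hbH, hbL⟩ hab
        simp only [Subtype.mk.injEq] at hab
        obtain ⟨z, hz, hza⟩ := (QuotientGroup.mk'_eq_mk' _).mp hab
        have hzel : z ∈ K ⊓ H := ⟨hz, by
          have : z = a⁻¹ * b := by rw [← hza]; group
          rw [this]; exact H.mul_mem (H.inv_mem haH) hbH⟩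
        rw [hc.disjoint.eq_bot, mem_bot] at hzel
        apply Subtype.ext
        simp only
        rw [← hza, hzel, mul_one]
      · rintro ⟨q, hq⟩
        obtain ⟨g, hg⟩ := QuotientGroup.mk'_surjective K q
        obtain ⟨⟨k, a⟩, hka⟩ := hc.existsUnique g |>.exists
        have hk1 : QuotientGroup.mk' K (((k, a).1 : ↥(K : Set G)) : G) = 1 :=
          (QuotientGroup.eq_one_iff _).mpr k.2
        have hmk : QuotientGroup.mk' K (a : G) = q := by
          rw [← hg, ← hka, map_mul, hk1, one_mul]
        have haL : (a : G) ∈ L := mem_comap.mpr (by rw [hmk]; exact hq)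
        exact ⟨⟨a, a.2, haL⟩, Subtype.ext hmk⟩
    have hcap1 : Nat.card ((H₁ ⊓ L).subgroupOf L) = p :=
      (Nat.card_congr (subgroupOfEquivOfLe inf_le_right).toEquiv).trans (hinter H₁ hc₁)
    have hcap2 : Nat.card ((H₂ ⊓ L).subgroupOf L) = p :=
      (Nat.card_congr (subgroupOfEquivOfLe inf_le_right).toEquiv).trans (hinter H₂ hc₂)
    have hcardL : Nat.card L = Nat.card K * p := by
      rw [← hcL1.card_mul, hKLcard, hcap1]
    have hfact : (Nat.card L).factorization p = 1 := by
      rw [hcardL, Nat.factorization_mul Nat.card_pos.ne' hp.pos.ne']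
      simp [Nat.factorization_eq_zero_of_not_dvd hpK, hp.factorization_self]
    let S₁ : Sylow p ↥L := Sylow.ofCard ((H₁ ⊓ L).subgroupOf L) (by rw [hcap1, hfact, pow_one])
    let S₂ : Sylow p ↥L := Sylow.ofCard ((H₂ ⊓ L).subgroupOf L) (by rw [hcap2, hfact, pow_one])
    obtain ⟨c, hc⟩ := MulAction.exists_smul_eq ↥L S₁ S₂
    have hconjL : ((H₁ ⊓ L).subgroupOf L).map (MulAut.conj c).toMonoidHom
        = (H₂ ⊓ L).subgroupOf L := by
      have h0 : ((c • S₁ : Sylow p ↥L) : Subgroup ↥L) = ((S₂ : Sylow p ↥L) : Subgroup ↥L) := by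
        rw [hc]
      rwa [Sylow.coe_subgroup_smul, smul_eq_conjMap, Sylow.coe_ofCard, Sylow.coe_ofCard] at h0
    have hconjG : (H₁ ⊓ L).map (MulAut.conj (c : G)).toMonoidHom = H₂ ⊓ L := by
      have h1 := congrArg (Subgroup.map L.subtype) hconjL
      rw [map_conjMap_comm L.subtype c, subgroupOf_map_subtype, subgroupOf_map_subtype] at h1
      simpa [inf_assoc] using h1
    set A : Subgroup G := H₁.map (MulAut.conj (c : G)).toMonoidHom with hAdef
    have hAL : A ⊓ L = H₂ ⊓ L := by
      have h6 : (H₁ ⊓ L).map (MulAut.conj (c : G)).toMonoidHom = A ⊓ L := by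
        rw [conjMap_inf, conjMap_normal (c : G) L, hAdef]
      rw [← h6, hconjG]
    have hAcard : Nat.card A = Nat.card H₁ :=
      (Nat.card_congr (equivMapOfInjective H₁ _ (MulEquiv.injective (MulAut.conj (c : G)))).toEquiv).symm
    have hcA : K.IsComplement' A := by
      apply isComplement'_of_card_mul_and_disjoint
      · rw [hAcard]; exact hc₁.card_mul
      · rw [disjoint_def]
        rintro x hxK ⟨a, ha, rfl⟩
        have h2 : a ∈ K := by
          have h3 := hKn.conj_mem _ hxK (c : G)⁻¹
          simpa [MulAut.conj_apply, mul_assoc] using h3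
        have h4 : a ∈ K ⊓ H₁ := ⟨h2, ha⟩
        rw [hc₁.disjoint.eq_bot, mem_bot] at h4
        rw [h4, map_one]
    set P : Subgroup G := H₂ ⊓ L with hPdef
    have hPcard : Nat.card P = p := hinter H₂ hc₂
    have hPA : P ≤ A := le_trans (le_of_eq hAL.symm) inf_le_left
    have hPH₂ : P ≤ H₂ := inf_le_left
    have hAnorm : A ≤ Subgroup.normalizer (P : Set G) := by
      have h5 := le_normalizer_inf (B := A) (L := L) hLn
      rwa [hAL] at h5
    have hH₂norm : H₂ ≤ Subgroup.normalizer (P : Set G) := le_normalizer_inf hLn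
    by_cases hM : Subgroup.normalizer (P : Set G) = ⊤
    · -- P is normal in G; pass to the quotient G ⧸ P
      haveI hPn : P.Normal := normalizer_eq_top_iff.mp hM
      set π := QuotientGroup.mk' P with hπdef
      set Kb := K.map π with hKbdef
      set Ab := A.map π with hAbdef
      set Hb := H₂.map π with hHbdef
      haveI hKbn : Kb.Normal := hKn.map π (QuotientGroup.mk'_surjective P)
      have hdisjKA := hcA.disjoint
      rw [disjoint_def] at hdisjKA
      have hdisjKH := hc₂.disjoint
      rw [disjoint_def] at hdisjKH
      have hcb : ∀ (B : Subgroup G), K.IsComplement' B → P ≤ B →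
          Kb.IsComplement' (B.map π) := by
        intro B hcB hPB
        have hdisj := hcB.disjoint
        rw [disjoint_def] at hdisj
        apply isComplement'_of_disjoint_and_mul_eq_univ
        · rw [disjoint_def]
          rintro x ⟨k, hk, rfl⟩ ⟨b, hb, hbk⟩
          obtain ⟨z, hz, hza⟩ := (QuotientGroup.mk'_eq_mk' _).mp hbk
          have hkB : k ∈ B := by
            rw [← hza]; exact B.mul_mem hb (hPB hz)
          rw [hdisj hk hkB, map_one]
        · rw [Set.eq_univ_iff_forall]
          intro w
          obtain ⟨g, rfl⟩ := QuotientGroup.mk'_surjective P w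
          obtain ⟨⟨k, b⟩, hg⟩ := hcB.existsUnique g |>.exists
          exact ⟨π k, mem_map_of_mem π k.2, π b, mem_map_of_mem π b.2,
            by rw [← hg]; exact (map_mul π _ _).symm⟩
      have hcb1 : Kb.IsComplement' Ab := hcb A hcA hPA
      have hcb2 : Kb.IsComplement' Hb := hcb H₂ hc₂ hPH₂
      have hKbcard : Nat.card Kb = Nat.card K := by
        symm
        apply Nat.card_eq_of_bijective (fun k : ↥K => (⟨π k, mem_map_of_mem π k.2⟩ : ↥Kb))
        constructor
        · rintro ⟨a, ha⟩ ⟨b, hb⟩ hab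
          simp only [Subtype.mk.injEq] at hab
          obtain ⟨z, hz, hza⟩ := (QuotientGroup.mk'_eq_mk' _).mp hab
          have hzK : z ∈ K := by
            have : z = a⁻¹ * b := by rw [← hza]; group
            rw [this]; exact K.mul_mem (K.inv_mem ha) hb
          have hz1 : z = 1 := hdisjKA hzK (hPA hz)
          apply Subtype.ext
          show a = b
          rw [← hza, hz1, mul_one]
        · rintro ⟨q, hq⟩
          obtain ⟨k, hk, hkq⟩ := hq
          exact ⟨⟨k, hk⟩, Subtype.ext hkq⟩
      have hGq : Nat.card (G ⧸ P) * p = Nat.card G := by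
        rw [← hPcard]
        exact (card_eq_card_quotient_mul_card_subgroup P).symm
      have hidx : Kb.index * p = K.index := by
        have h1 : Nat.card Kb * Kb.index = Nat.card (G ⧸ P) := Kb.card_mul_index
        have h2 : Nat.card K * K.index = Nat.card G := K.card_mul_index
        have h3 : Nat.card K * (Kb.index * p) = Nat.card K * K.index :=
          calc Nat.card K * (Kb.index * p) = Nat.card Kb * Kb.index * p := by
                rw [hKbcard, mul_assoc]
            _ = Nat.card G := by rw [h1, hGq]
            _ = Nat.card K * K.index := h2.symm
        exact Nat.eq_of_mul_eq_mul_left Nat.card_pos h3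
      have hcopb : Nat.Coprime (Nat.card Kb) Kb.index := by
        rw [hKbcard]
        exact Nat.Coprime.coprime_dvd_right ⟨p, hidx.symm⟩ hcop
      have hcycb : IsCyclic ((G ⧸ P) ⧸ Kb) := by
        have hker : K ≤ ((QuotientGroup.mk' Kb).comp π).ker := by
          intro x hx
          rw [MonoidHom.mem_ker, MonoidHom.comp_apply]
          exact (QuotientGroup.eq_one_iff _).mpr (mem_map_of_mem π hx)
        apply isCyclic_of_surjective (QuotientGroup.lift K ((QuotientGroup.mk' Kb).comp π) hker)
        intro w
        obtain ⟨v, rfl⟩ := QuotientGroup.mk'_surjective Kb w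
        obtain ⟨g, rfl⟩ := QuotientGroup.mk'_surjective P v
        exact ⟨QuotientGroup.mk g, rfl⟩
      have hqlt : Nat.card (G ⧸ P) ≤ n := by
        have hlt : Nat.card (G ⧸ P) < Nat.card G := by
          rw [← hGq]
          exact lt_mul_of_one_lt_right Nat.card_pos hp.one_lt
        omega
      obtain ⟨w, hw⟩ := ih (G ⧸ P) hqlt Kb Ab Hb hcb1 hcb2 hcopb hcycb
      obtain ⟨g₂, rfl⟩ := QuotientGroup.mk'_surjective P w
      refine ⟨g₂ * (c : G), ?_⟩
      rw [← conjMap_conjMap, ← hAdef]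
      have h1 : (A.map (MulAut.conj g₂).toMonoidHom).map π = H₂.map π := by
        rw [map_conjMap_comm π g₂ A]
        exact hw
      have h2 := congrArg (comap π) h1
      have hPle : P ≤ A.map (MulAut.conj g₂).toMonoidHom := by
        conv_lhs => rw [← conjMap_normal g₂ P]
        exact map_mono hPA
      rw [comap_map_eq, comap_map_eq, QuotientGroup.ker_mk',
        sup_of_le_left hPle, sup_of_le_left hPH₂] at h2
      exact h2
    · -- the normalizer M of P is proper; use induction inside M
      set M := Subgroup.normalizer (P : Set G) with hMdef
      have hAM : A ≤ M := hAnorm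
      have hH₂M : H₂ ≤ M := hH₂norm
      have hcM1 := isComplement'_subgroupOf_right hcA hAM
      have hcM2 := isComplement'_subgroupOf_right hc₂ hH₂M
      have hidx : (K.subgroupOf M).index = K.index := by
        rw [hcM1.symm.index_eq_card, Nat.card_congr (subgroupOfEquivOfLe hAM).toEquiv,
          hAcard, ← hc₁.symm.index_eq_card]
      have hcopM : Nat.Coprime (Nat.card (K.subgroupOf M)) (K.subgroupOf M).index := by
        rw [hidx]
        apply Nat.Coprime.coprime_dvd_left _ hcop
        rw [card_subgroupOf_le]
        exact card_dvd_of_le inf_le_left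
      haveI := hcyc
      have hAinj : Function.Injective ((QuotientGroup.mk' K).comp A.subtype) := by
        rw [← MonoidHom.ker_eq_bot_iff, eq_bot_iff]
        intro a ha
        rw [MonoidHom.mem_ker, MonoidHom.comp_apply] at ha
        have h1 : (a : G) ∈ K := (QuotientGroup.eq_one_iff _).mp ha
        have h2 : (a : G) ∈ K ⊓ A := ⟨h1, a.2⟩
        rw [hcA.disjoint.eq_bot, mem_bot] at h2
        exact mem_bot.mpr (Subtype.ext h2)
      haveI hcycA : IsCyclic A := by
        haveI : IsCyclic (((QuotientGroup.mk' K).comp A.subtype).range) := Subgroup.isCyclic _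
        exact isCyclic_of_surjective (MonoidHom.ofInjective hAinj).symm
          (MulEquiv.surjective _)
      haveI hcycA' : IsCyclic (A.subgroupOf M) :=
        isCyclic_of_surjective (subgroupOfEquivOfLe hAM).symm (MulEquiv.surjective _)
      have hcycM : IsCyclic (↥M ⧸ K.subgroupOf M) := by
        apply isCyclic_of_surjective
          ((QuotientGroup.mk' (K.subgroupOf M)).comp (A.subgroupOf M).subtype)
        intro w
        obtain ⟨m, rfl⟩ := QuotientGroup.mk'_surjective _ w
        obtain ⟨⟨k, a⟩, hg⟩ := hcM1.existsUnique m |>.exists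
        refine ⟨a, ?_⟩
        have hk1 : QuotientGroup.mk' (K.subgroupOf M)
            (((k, a).1 : ↥((K.subgroupOf M : Subgroup ↥M) : Set ↥M)) : ↥M) = 1 :=
          (QuotientGroup.eq_one_iff _).mpr k.2
        rw [MonoidHom.comp_apply, ← hg, map_mul, hk1, one_mul]
        rfl
      have hMlt : Nat.card ↥M ≤ n := by
        have := card_lt_of_ne_top (G := G) hM
        omega
      obtain ⟨m, hm⟩ := ih ↥M hMlt (K.subgroupOf M) (A.subgroupOf M) (H₂.subgroupOf M)
        hcM1 hcM2 hcopM hcycM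
      refine ⟨(m : G) * (c : G), ?_⟩
      rw [← conjMap_conjMap, ← hAdef]
      have h1 := congrArg (Subgroup.map M.subtype) hm
      rw [map_conjMap_comm M.subtype m, subgroupOf_map_subtype, subgroupOf_map_subtype,
        inf_of_le_left hAM, inf_of_le_left hH₂M] at h1
      exact h1


/-- If `y` is a `π`-element of a finite group `G` normalizing a `π'`-subgroup
`K ≤ G`, then the `K`-conjugacy class of `y` equals the set of `π`-elements of
the coset `Ky`. -/
theorem conj_class_eq_pi_elements_of_coset {G : Type*} [Group G] [Finite G]
    (π : Set ℕ) (hπ : ∀ q ∈ π, Nat.Prime q)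
    (K : Subgroup G) (hK : ∀ q : ℕ, q.Prime → q ∣ Nat.card K → q ∉ π)
    (y : G) (hy : ∀ q : ℕ, q.Prime → q ∣ orderOf y → q ∈ π)
    (hnorm : ∀ k ∈ K, y * k * y⁻¹ ∈ K) :
    {z : G | ∃ k ∈ K, z = k⁻¹ * y * k}
      = {z : G | z ∈ (fun k => k * y) '' (K : Set G) ∧
          ∀ q : ℕ, q.Prime → q ∣ orderOf z → q ∈ π} := by
  ext z
  simp only [Set.mem_setOf_eq, Set.mem_image, SetLike.mem_coe]
  constructor
  · rintro ⟨k, hk, rfl⟩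
    constructor
    · refine ⟨k⁻¹ * (y * k * y⁻¹), K.mul_mem (K.inv_mem hk) (hnorm k hk), ?_⟩
      group
    · intro q hq hqd
      apply hy q hq
      have : k⁻¹ * y * k = (MulAut.conj k⁻¹).toMonoidHom y := by
        simp [MulAut.conj_apply]
      rwa [this, orderOf_injective _ (MulAut.conj k⁻¹).injective y] at hqd
  · rintro ⟨⟨k, hk, rfl⟩, hz2⟩
    -- reverse normalization (finiteness)
    have hnorm' : ∀ k' ∈ K, y⁻¹ * k' * y ∈ K := by
      have hsurj : Function.Surjective
          (fun a : ↥K => (⟨y * a * y⁻¹, hnorm a a.2⟩ : ↥K)) := by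
        apply Finite.surjective_of_injective
        intro a b hab
        have h1 : y * (a : G) * y⁻¹ = y * (b : G) * y⁻¹ := congrArg Subtype.val hab
        exact Subtype.ext (by
          have := mul_right_cancel h1
          exact mul_left_cancel this)
      intro k' hk'
      obtain ⟨a, ha⟩ := hsurj ⟨k', hk'⟩
      have h2 : y * (a : G) * y⁻¹ = k' := congrArg Subtype.val ha
      have h3 : (a : G) = y⁻¹ * k' * y := by rw [← h2]; group
      rw [← h3]; exact a.2
    have hyN : y ∈ Subgroup.normalizer (K : Set G) := by
      rw [Subgroup.mem_normalizer_iff]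
      intro h
      constructor
      · exact fun hh => hnorm h hh
      · intro hh
        have := hnorm' _ hh
        have h4 : y⁻¹ * (y * h * y⁻¹) * y = h := by group
        rwa [h4] at this
    set H : Subgroup G := K ⊔ Subgroup.zpowers y with hHdef
    have hKH : K ≤ H := le_sup_left
    have hyH : y ∈ H := Subgroup.mem_sup_right (Subgroup.mem_zpowers y)
    have hHN : H ≤ Subgroup.normalizer (K : Set G) := sup_le Subgroup.le_normalizer (Subgroup.zpowers_le.mpr hyN)
    haveI hKnH : (K.subgroupOf H).Normal := by
      constructor
      rintro ⟨a, haH⟩ ha ⟨g, hgH⟩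
      rw [Subgroup.mem_subgroupOf] at ha ⊢
      exact (Subgroup.mem_normalizer_iff.mp (hHN hgH) a).mp ha
    -- coprimality helpers
    have hcop : ∀ m : ℕ, (∀ q, q.Prime → q ∣ m → q ∈ π) → Nat.Coprime (Nat.card K) m := by
      intro m hm
      apply coprime_of_no_common_prime
      intro q hq hqK hqm
      exact hK q hq hqK (hm q hq hqm)
    have hdisj : ∀ x : G, x ∈ K → (∀ q, q.Prime → q ∣ orderOf x → q ∈ π) → x = 1 := by
      intro x hxK hx
      have h1 : orderOf x ∣ Nat.card K := K.orderOf_dvd_natCard hxK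
      have h2 : Nat.Coprime (Nat.card K) (orderOf x) := hcop _ hx
      have h3 : orderOf x ∣ 1 := h2 ▸ Nat.dvd_gcd h1 dvd_rfl
      rw [orderOf_eq_one_iff.mp (Nat.dvd_one.mp h3)]
    set yh : ↥H := ⟨y, hyH⟩ with hyhdef
    set zh : ↥H := ⟨k * y, H.mul_mem (hKH hk) hyH⟩ with hzhdef
    have hsup : K.subgroupOf H ⊔ Subgroup.zpowers yh = ⊤ := by
      apply Subgroup.map_injective H.subtype_injective
      rw [Subgroup.map_sup, Subgroup.subgroupOf_map_subtype, inf_of_le_left hKH,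
        MonoidHom.map_zpowers]
      have h5 : Subgroup.map H.subtype ⊤ = H := by
        rw [← MonoidHom.range_eq_map]
        exact Subgroup.range_subtype H
      rw [h5]
      exact hHdef.symm
    have hordyh : orderOf yh = orderOf y := Subgroup.orderOf_mk y hyH
    have hordzh : orderOf zh = orderOf (k * y) := Subgroup.orderOf_mk _ _
    have hdisjH : ∀ (w : ↥H) (x : ↥H), x ∈ K.subgroupOf H → x ∈ Subgroup.zpowers w →
        (∀ q, q.Prime → q ∣ orderOf (w : G) → q ∈ π) → x = 1 := by
      intro w x hx1 hx2 hw
      apply Subtype.ext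
      apply hdisj _ (Subgroup.mem_subgroupOf.mp hx1)
      intro q hq hqd
      apply hw q hq
      have h6 : orderOf (x : G) = orderOf x := Subgroup.orderOf_coe x
      have h7 : orderOf x ∣ orderOf w := orderOf_dvd_of_mem_zpowers hx2
      have h8 : orderOf w = orderOf (w : G) := (Subgroup.orderOf_coe w).symm
      exact hqd.trans (h6 ▸ (h7.trans (h8 ▸ dvd_rfl)))
    have hcomp1 : (K.subgroupOf H).IsComplement' (Subgroup.zpowers yh) := by
      apply Subgroup.isComplement'_of_disjoint_and_mul_eq_univ
      · rw [Subgroup.disjoint_def]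
        intro x hx1 hx2
        exact hdisjH yh x hx1 hx2 hy
      · have h9 := Subgroup.normal_mul (K.subgroupOf H) (Subgroup.zpowers yh)
        rw [hsup] at h9
        rw [← h9, Subgroup.coe_top]
    set mkH := QuotientGroup.mk' (K.subgroupOf H) with hmkHdef
    have hmkz : mkH zh = mkH yh := by
      have h10 : zh = (⟨k, hKH hk⟩ : ↥H) * yh := Subtype.ext rfl
      have h11 : mkH (⟨k, hKH hk⟩ : ↥H) = 1 :=
        (QuotientGroup.eq_one_iff _).mpr (Subgroup.mem_subgroupOf.mpr hk)
      rw [h10, map_mul, h11, one_mul]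
    -- the order of z equals the order of y
    have hordz : orderOf (k * y) = orderOf y := by
      apply Nat.dvd_antisymm
      · -- z ^ (orderOf y) = 1
        have h12 : mkH (zh ^ orderOf y) = 1 := by
          rw [map_pow, hmkz, ← map_pow, ← hordyh, pow_orderOf_eq_one, map_one]
        have h13 : zh ^ orderOf y ∈ K.subgroupOf H := (QuotientGroup.eq_one_iff _).mp h12
        have h14 : zh ^ orderOf y = 1 := by
          apply hdisjH zh _ h13 (Subgroup.pow_mem _ (Subgroup.mem_zpowers zh) _)
          exact hz2
        rw [← hordzh]
        exact orderOf_dvd_of_pow_eq_one h14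
      · -- y ^ (orderOf z) = 1
        have h15 : mkH (yh ^ orderOf (k * y)) = 1 := by
          rw [map_pow, ← hmkz, ← map_pow, ← hordzh, pow_orderOf_eq_one, map_one]
        have h16 : yh ^ orderOf (k * y) ∈ K.subgroupOf H := (QuotientGroup.eq_one_iff _).mp h15
        have h17 : yh ^ orderOf (k * y) = 1 := by
          apply hdisjH yh _ h16 (Subgroup.pow_mem _ (Subgroup.mem_zpowers yh) _)
          exact hy
        rw [← hordyh]
        exact orderOf_dvd_of_pow_eq_one h17
    have hcomp2 : (K.subgroupOf H).IsComplement' (Subgroup.zpowers zh) := by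
      apply Subgroup.isComplement'_of_card_mul_and_disjoint
      · have h18 := hcomp1.card_mul
        rw [Nat.card_zpowers] at h18 ⊢
        rw [hordzh, hordz, ← hordyh]
        exact h18
      · rw [Subgroup.disjoint_def]
        intro x hx1 hx2
        exact hdisjH zh x hx1 hx2 hz2
    have hcopH : Nat.Coprime (Nat.card (K.subgroupOf H)) (K.subgroupOf H).index := by
      rw [hcomp1.symm.index_eq_card, Nat.card_zpowers, hordyh,
        Nat.card_congr (Subgroup.subgroupOfEquivOfLe hKH).toEquiv]
      exact hcop _ hy
    haveI : IsCyclic ↥(Subgroup.zpowers yh) := _root_.isCyclic_zpowers yh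
    have hcycH : IsCyclic (↥H ⧸ K.subgroupOf H) := by
      apply isCyclic_of_surjective
        ((QuotientGroup.mk' (K.subgroupOf H)).comp (Subgroup.zpowers yh).subtype)
      intro w
      obtain ⟨m, rfl⟩ := QuotientGroup.mk'_surjective _ w
      obtain ⟨⟨a, b⟩, hg⟩ := hcomp1.existsUnique m |>.exists
      refine ⟨b, ?_⟩
      have ha1 : QuotientGroup.mk' (K.subgroupOf H)
          (((a, b).1 : ↥((K.subgroupOf H : Subgroup ↥H) : Set ↥H)) : ↥H) = 1 :=
        (QuotientGroup.eq_one_iff _).mpr a.2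
      rw [MonoidHom.comp_apply, ← hg, map_mul, ha1, one_mul]
      rfl
    obtain ⟨g, hg⟩ := SZ_cyclic (Nat.card ↥H) ↥H le_rfl (K.subgroupOf H)
      (Subgroup.zpowers yh) (Subgroup.zpowers zh) hcomp1 hcomp2 hcopH hcycH
    obtain ⟨⟨u, v⟩, huv⟩ := hcomp2.symm.existsUnique g |>.exists
    have hzy : (v : ↥H) * yh * (v : ↥H)⁻¹ ∈ Subgroup.zpowers zh := by
      have h19 : (MulAut.conj g).toMonoidHom yh ∈ Subgroup.zpowers zh :=
        hg ▸ Subgroup.mem_map_of_mem _ (Subgroup.mem_zpowers yh)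
      have h20 : (v : ↥H) * yh * (v : ↥H)⁻¹
          = (↑u)⁻¹ * ((MulAut.conj g).toMonoidHom yh) * ↑u := by
        rw [← huv]
        simp only [MulEquiv.coe_toMonoidHom, MulAut.conj_apply]
        group
      rw [h20]
      exact Subgroup.mul_mem _ (Subgroup.mul_mem _ (Subgroup.inv_mem _ u.2) h19) u.2
    have hveq : (v : ↥H) * yh * (v : ↥H)⁻¹ = zh := by
      have hmkv : mkH ↑v = 1 := (QuotientGroup.eq_one_iff _).mpr v.2
      have h21 : mkH ((v : ↥H) * yh * (v : ↥H)⁻¹) = mkH zh := by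
        rw [map_mul, map_mul, map_inv, hmkv, one_mul, inv_one, mul_one, hmkz]
      obtain ⟨t, ht, hteq⟩ := (QuotientGroup.mk'_eq_mk' _).mp h21
      have htz : t ∈ Subgroup.zpowers zh := by
        have h22 : t = ((v : ↥H) * yh * (v : ↥H)⁻¹)⁻¹ * zh := by rw [← hteq]; group
        rw [h22]
        exact Subgroup.mul_mem _ (Subgroup.inv_mem _ hzy) (Subgroup.mem_zpowers zh)
      have ht1 : t = 1 := hdisjH zh t ht htz hz2
      rw [← hteq, ht1, mul_one]
    refine ⟨((v : ↥H) : G)⁻¹, K.inv_mem (Subgroup.mem_subgroupOf.mp v.2), ?_⟩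
    have h23 : ((v : ↥H) : G) * y * ((v : ↥H) : G)⁻¹ = k * y := by
      have := congrArg (Subtype.val) hveq
      simpa using this
    rw [inv_inv, ← h23]
end

section
/- Let G be a finite group, π a set of primes, and x a π-element of G not lying in O_π(G), the largest normal π-subgroup of G. Let D = {y ∈ G : ⟨y⟩ is G-conjugate to ⟨x⟩}. Then |D| ≥ p² − 1, where p is the smallest prime dividing o(x). -/
namespace CardGenConjAux

variable {G : Type*} [Group G]

/-- Conjugation by `g` as a monoid hom. -/
def c (g : G) : G →* G := (MulAut.conj g).toMonoidHom

@[simp] lemma c_apply (g a : G) : c g a = g * a * g⁻¹ := rfl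

lemma c_injective (g : G) : Function.Injective (c g) :=
  (MulAut.conj g).injective

lemma map_c_map_c (a b : G) (H : Subgroup G) :
    (H.map (c b)).map (c a) = H.map (c (a * b)) := by
  rw [Subgroup.map_map]
  congr 1
  ext h
  simp [c, mul_assoc]

lemma map_c_one (H : Subgroup G) : H.map (c 1) = H := by
  ext h; simp [Subgroup.mem_map, c]

lemma map_c_zpowers (g y : G) :
    (Subgroup.zpowers y).map (c g) = Subgroup.zpowers (g * y * g⁻¹) := by
  rw [MonoidHom.map_zpowers]; rfl

lemma mem_normalizer_iff_map {g : G} {H : Subgroup G} :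
    g ∈ Subgroup.normalizer H ↔ H.map (c g) = H := by
  rw [Subgroup.mem_normalizer_iff]
  constructor
  · intro h
    ext y
    simp only [Subgroup.mem_map, c_apply]
    constructor
    · rintro ⟨z, hz, rfl⟩
      exact (h z).mp hz
    · intro hy
      refine ⟨g⁻¹ * y * g, (h _).mpr ?_, by group⟩
      convert hy using 1
      group
  · intro hmap z
    constructor
    · intro hz
      rw [← hmap]
      exact ⟨z, hz, rfl⟩
    · intro hz
      rw [← hmap] at hz
      obtain ⟨w, hw, hwz⟩ := hz
      simp only [c_apply] at hwz
      have : w = z := mul_left_cancel (mul_right_cancel hwz)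
      rwa [← this]

/-- If `H` normalizes `K` then the cardinality of the join divides the product. -/
lemma card_sup_dvd [Finite G] (H K : Subgroup G) (h : H ≤ Subgroup.normalizer K) :
    Nat.card ↥(H ⊔ K) ∣ Nat.card H * Nat.card K := by
  set M := Subgroup.normalizer (K : Set G) with hM
  have hKM : K ≤ M := Subgroup.le_normalizer
  have hsup : H ⊔ K ≤ M := sup_le h hKM
  set A := H.subgroupOf M with hA
  set B := K.subgroupOf M with hB
  have hBnormal : B.Normal := Subgroup.normal_in_normalizer
  have hABsup : A ⊔ B = (H ⊔ K).subgroupOf M := (Subgroup.subgroupOf_sup h hKM).symm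
  have cardA : Nat.card A = Nat.card H :=
    Nat.card_congr (Subgroup.subgroupOfEquivOfLe h).toEquiv
  have cardB : Nat.card B = Nat.card K :=
    Nat.card_congr (Subgroup.subgroupOfEquivOfLe hKM).toEquiv
  have cardAB : Nat.card ↥(A ⊔ B) = Nat.card ↥(H ⊔ K) := by
    rw [hABsup]
    exact Nat.card_congr (Subgroup.subgroupOfEquivOfLe hsup).toEquiv
  rw [← cardA, ← cardB, ← cardAB]
  have key : Nat.card ↥(A ⊔ B) = B.relIndex A * Nat.card B := by
    have h1 := Subgroup.card_eq_card_quotient_mul_card_subgroup (B.subgroupOf (A ⊔ B))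
    rw [h1]
    congr 1
    · rw [← Subgroup.index_eq_card]
      exact Subgroup.relIndex_sup_right A B
    · exact Nat.card_congr (Subgroup.subgroupOfEquivOfLe le_sup_right).toEquiv
  rw [key]
  exact mul_dvd_mul_right (Subgroup.index_dvd_card (B.subgroupOf A)) _

/-- Finite join of mutually normalizing `π`-subgroups is a `π`-group (card version). -/
lemma sup_pi [Finite G] (π : Set ℕ) (t : Finset (Subgroup G)) :
    (∀ H ∈ t, ∀ K ∈ t, H ≤ Subgroup.normalizer K) →
    (∀ H ∈ t, ∀ q : ℕ, q.Prime → q ∣ Nat.card H → q ∈ π) →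
    ∀ q : ℕ, q.Prime → q ∣ Nat.card (t.sup id : Subgroup G) → q ∈ π := by
  classical
  induction t using Finset.induction_on with
  | empty =>
      intro _ _ q hq hdvd
      rw [Finset.sup_empty, Subgroup.card_bot, Nat.dvd_one] at hdvd
      exact absurd hdvd hq.ne_one
  | @insert a s ha ih =>
      intro h1 h2 q hq hdvd
      have hamem : a ∈ insert a s := Finset.mem_insert_self a s
      have hBnorm : (s.sup id : Subgroup G) ≤ Subgroup.normalizer a :=
        Finset.sup_le fun K hK =>
          h1 K (Finset.mem_insert_of_mem hK) a hamem
      rw [Finset.sup_insert] at hdvd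
      have hdvd2 : Nat.card ↥(a ⊔ s.sup id) ∣ Nat.card (s.sup id : Subgroup G) * Nat.card a := by
        rw [sup_comm]
        exact card_sup_dvd _ _ hBnorm
      rcases (Nat.Prime.dvd_mul hq).mp (hdvd.trans hdvd2) with hcase | hcase
      · exact ih (fun H hH K hK => h1 H (Finset.mem_insert_of_mem hH) K (Finset.mem_insert_of_mem hK))
          (fun H hH => h2 H (Finset.mem_insert_of_mem hH)) q hq hcase
      · exact h2 a hamem q hq hcase

end CardGenConjAux

open CardGenConjAux in
/-- If `x` is a `π`-element of a finite group `G` not lying in `O_π(G)` (i.e. in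
no normal `π`-subgroup), and `D` is the set of `y ∈ G` such that `⟨y⟩` is
`G`-conjugate to `⟨x⟩`, then `|D| ≥ p² - 1`, where `p` is the smallest prime
dividing `o(x)`. -/
theorem card_generating_conjugates_ge {G : Type*} [Group G] [Finite G]
    (π : Set ℕ) (hπ : ∀ q ∈ π, Nat.Prime q)
    (x : G) (hx : ∀ q : ℕ, q.Prime → q ∣ orderOf x → q ∈ π)
    (hxO : ∀ N : Subgroup G, N.Normal →
      (∀ n ∈ N, ∀ q : ℕ, q.Prime → q ∣ orderOf n → q ∈ π) → x ∉ N)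
    {p : ℕ} (hp : p.Prime) (hpx : p ∣ orderOf x)
    (hpmin : ∀ q : ℕ, q.Prime → q ∣ orderOf x → p ≤ q) :
    p ^ 2 - 1 ≤
      Nat.card {y : G | ∃ g : G, Subgroup.zpowers (g * y * g⁻¹) = Subgroup.zpowers x} := by
  classical
  have hFinSub : Finite (Subgroup G) :=
    Finite.of_injective (fun H : Subgroup G => (H : Set G)) SetLike.coe_injective
  set n := orderOf x with hn
  have hn0 : 0 < n := orderOf_pos x
  have hpn : p ≤ n := Nat.le_of_dvd hn0 hpx
  -- coprimality helper
  have copr : ∀ m : ℕ, m ≠ 0 → m < p → Nat.Coprime m n := by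
    intro m hm0 hmp
    by_contra hcop
    have hd : Nat.gcd m n ≠ 1 := hcop
    have hq : (Nat.gcd m n).minFac.Prime := Nat.minFac_prime hd
    have hqm : (Nat.gcd m n).minFac ∣ m := (Nat.minFac_dvd _).trans (Nat.gcd_dvd_left _ _)
    have hqn : (Nat.gcd m n).minFac ∣ n := (Nat.minFac_dvd _).trans (Nat.gcd_dvd_right _ _)
    have hle1 := hpmin _ hq hqn
    have hle2 : (Nat.gcd m n).minFac ≤ m := Nat.le_of_dvd (Nat.pos_of_ne_zero hm0) hqm
    omega
  set X : Set (Subgroup G) := {H | ∃ g : G, H.map (c g) = Subgroup.zpowers x} with hX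
  have hXconj : ∀ H ∈ X, ∀ g : G, H.map (c g) ∈ X := by
    rintro H ⟨g', hg'⟩ g
    exact ⟨g' * g⁻¹, by rw [map_c_map_c, mul_assoc, inv_mul_cancel, mul_one, hg']⟩
  have hxX : Subgroup.zpowers x ∈ X := ⟨1, map_c_one _⟩
  have hcardX : ∀ H ∈ X, Nat.card H = n := by
    rintro H ⟨g, hg⟩
    have h1 : Nat.card (H.map (c g)) = Nat.card H :=
      (Nat.card_congr (Subgroup.equivMapOfInjective H (c g) (c_injective g)).toEquiv).symm
    rw [hg, Nat.card_zpowers] at h1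
    exact h1.symm
  set S : Set G := {y : G | ∃ g : G, Subgroup.zpowers (g * y * g⁻¹) = Subgroup.zpowers x}
    with hS
  have hDX : ∀ y : G, y ∈ S ↔ Subgroup.zpowers y ∈ X := by
    intro y
    constructor
    · rintro ⟨g, hg⟩
      exact ⟨g, by rw [map_c_zpowers, hg]⟩
    · rintro ⟨g, hg⟩
      exact ⟨g, by rw [← map_c_zpowers, hg]⟩
  have hSfin : S.Finite := Set.toFinite S
  have hXfin : X.Finite := Set.toFinite X
  set DF := hSfin.toFinset with hDF
  set XF := hXfin.toFinset with hXF
  -- each fiber has at least p - 1 elements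
  have fiber_bound : ∀ H ∈ XF, p - 1 ≤ (DF.filter (fun y => Subgroup.zpowers y = H)).card := by
    intro H hH
    have hHX : H ∈ X := hXfin.mem_toFinset.mp hH
    obtain ⟨g, hg⟩ := hHX
    set y₀ := g⁻¹ * x * g with hy₀def
    have hy₀ : Subgroup.zpowers y₀ = H := by
      apply Subgroup.map_injective (c_injective g)
      rw [map_c_zpowers, hg]
      congr 1
      rw [hy₀def]
      group
    have hy₀ord : orderOf y₀ = n := by
      have := orderOf_injective (c g⁻¹) (c_injective g⁻¹) x
      simp only [c_apply, inv_inv] at this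
      rw [hy₀def, hn, ← this]
    have hIcc : (Finset.Icc 1 (p - 1)).card = p - 1 := by
      rw [Nat.card_Icc]; omega
    rw [← hIcc]
    apply Finset.card_le_card_of_injOn (fun m => y₀ ^ m)
    · intro m hm
      simp only [Finset.mem_coe, Finset.mem_Icc] at hm
      have hp2 := hp.two_le
      have hm0 : m ≠ 0 := by omega
      have hmp : m < p := by omega
      have hcop : Nat.Coprime m n := copr m hm0 hmp
      have hord : orderOf (y₀ ^ m) = n := by
        rw [orderOf_pow, hy₀ord, Nat.Coprime.gcd_eq_one hcop.symm, Nat.div_one]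
      have hzp : Subgroup.zpowers (y₀ ^ m) = Subgroup.zpowers y₀ := by
        apply Subgroup.eq_of_le_of_card_ge
        · exact Subgroup.zpowers_le.mpr (Subgroup.pow_mem _ (Subgroup.mem_zpowers y₀) m)
        · rw [Nat.card_zpowers, Nat.card_zpowers, hord, hy₀ord]
      simp only [Finset.mem_coe, Finset.mem_filter]
      constructor
      · rw [hDF, hSfin.mem_toFinset, hDX, hzp, hy₀]
        exact hXfin.mem_toFinset.mp hH
      · rw [hzp, hy₀]
    · intro m₁ h₁ m₂ h₂ heq
      simp only [Finset.coe_Icc, Set.mem_Icc] at h₁ h₂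
      refine pow_injOn_Iio_orderOf ?_ ?_ heq
      · simp only [Set.mem_Iio, hy₀ord]; omega
      · simp only [Set.mem_Iio, hy₀ord]; omega
  -- the sum over fibers
  have hmapDF : ∀ y ∈ DF, Subgroup.zpowers y ∈ XF := by
    intro y hy
    rw [hXF, hXfin.mem_toFinset]
    exact (hDX y).mp (hSfin.mem_toFinset.mp hy)
  have hsum := Finset.card_eq_sum_card_fiberwise hmapDF
  have hlow : XF.card * (p - 1) ≤ DF.card := by
    rw [hsum]
    calc XF.card * (p - 1) = ∑ _H ∈ XF, (p - 1) := by
          rw [Finset.sum_const, smul_eq_mul]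
      _ ≤ ∑ H ∈ XF, (DF.filter (fun y => Subgroup.zpowers y = H)).card :=
          Finset.sum_le_sum fiber_bound
  -- at least p + 1 conjugate subgroups
  have hXcard : p + 1 ≤ XF.card := by
    by_cases hA : ∀ H ∈ X, x ∈ Subgroup.normalizer H
    · exfalso
      set N : Subgroup G := XF.sup id with hN
      have hsubN : ∀ H ∈ X, H ≤ N := fun H hH =>
        Finset.le_sup (f := id) (hXfin.mem_toFinset.mpr hH)
      have hxN : x ∈ N := hsubN _ hxX (Subgroup.mem_zpowers x)
      have hA2 : ∀ H ∈ X, ∀ K ∈ X, H ≤ Subgroup.normalizer K := by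
        intro H hHX K hKX
        intro h hh
        obtain ⟨g, hg⟩ := hHX
        have hhx : c g h ∈ Subgroup.zpowers x := by
          rw [← hg]; exact Subgroup.mem_map_of_mem _ hh
        obtain ⟨m, hm⟩ := Subgroup.mem_zpowers_iff.mp hhx
        have hK' : K.map (c g) ∈ X := hXconj K hKX g
        have hstep : (K.map (c g)).map (c (x ^ m)) = K.map (c g) :=
          mem_normalizer_iff_map.mp (Subgroup.zpow_mem _ (hA _ hK') m)
        have hh' : h = g⁻¹ * x ^ m * g := by
          have : x ^ m = g * h * g⁻¹ := by simpa using hm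
          rw [this]; group
        have hfix : K.map (c (g⁻¹ * x ^ m * g)) = K := by
          calc K.map (c (g⁻¹ * x ^ m * g))
              = ((K.map (c g)).map (c (x ^ m))).map (c g⁻¹) := by
                rw [map_c_map_c, map_c_map_c, mul_assoc]
            _ = (K.map (c g)).map (c g⁻¹) := by rw [hstep]
            _ = K.map (c (g⁻¹ * g)) := by rw [map_c_map_c]
            _ = K := by rw [inv_mul_cancel, map_c_one]
        rw [hh']
        exact mem_normalizer_iff_map.mpr hfix
      have hNnormal : N.Normal := by
        constructor
        intro m hm g
        have hmap2 : N.map (c g) ≤ N := by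
          rw [hN, Finset.comp_sup_eq_sup_comp (Subgroup.map (c g))
            (fun A B => Subgroup.map_sup A B (c g)) (Subgroup.map_bot (c g))]
          apply Finset.sup_le
          intro A hAmem
          exact hsubN _ (hXconj A (hXfin.mem_toFinset.mp hAmem) g)
        have : c g m ∈ N.map (c g) := Subgroup.mem_map_of_mem _ hm
        exact hmap2 this
      have hNpi : ∀ m ∈ N, ∀ q : ℕ, q.Prime → q ∣ orderOf m → q ∈ π := by
        intro m hm q hq hqm
        have h1 : orderOf m ∣ Nat.card N := by
          have h2 := orderOf_dvd_natCard (⟨m, hm⟩ : N)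
          have h3 : orderOf m = orderOf (⟨m, hm⟩ : N) :=
            orderOf_injective N.subtype N.subtype_injective ⟨m, hm⟩
          rwa [← h3] at h2
        refine sup_pi π XF ?_ ?_ q hq ((hqm.trans h1).trans (dvd_refl _))
        · intro H hH K hK
          exact hA2 H (hXfin.mem_toFinset.mp hH) K (hXfin.mem_toFinset.mp hK)
        · intro H hH q' hq' hq'H
          rw [hcardX H (hXfin.mem_toFinset.mp hH)] at hq'H
          exact hx q' hq' hq'H
      exact hxO N hNnormal hNpi hxN
    · push_neg at hA
      obtain ⟨H₀, hH₀X, hH₀⟩ := hA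
      have hmemψ : ∀ i : ℕ, H₀.map (c (x ^ i)) ∈ X := fun i => hXconj H₀ hH₀X _
      have step : ∀ i j : ℕ, i ≤ j → j < p →
          H₀.map (c (x ^ i)) = H₀.map (c (x ^ j)) → i = j := by
        intro i j hle hjp heq
        by_contra hne
        have hm0 : j - i ≠ 0 := by omega
        have hx_pow : H₀.map (c (x ^ (j - i))) = H₀ := by
          have e1 : (x ^ i)⁻¹ * x ^ j = x ^ (j - i) := by
            have e2 : x ^ j = x ^ i * x ^ (j - i) := by
              rw [← pow_add]; congr 1; omega
            rw [e2]; group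
          calc H₀.map (c (x ^ (j - i)))
              = H₀.map (c ((x ^ i)⁻¹ * x ^ j)) := by rw [e1]
            _ = (H₀.map (c (x ^ j))).map (c (x ^ i)⁻¹) := by rw [map_c_map_c]
            _ = (H₀.map (c (x ^ i))).map (c (x ^ i)⁻¹) := by rw [heq]
            _ = H₀.map (c ((x ^ i)⁻¹ * x ^ i)) := by rw [map_c_map_c]
            _ = H₀ := by rw [inv_mul_cancel, map_c_one]
        apply hH₀
        have hT : x ^ (j - i) ∈ Subgroup.normalizer H₀ := mem_normalizer_iff_map.mpr hx_pow
        have hcop : Nat.Coprime (j - i) n := copr _ hm0 (by omega)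
        have hbez := Nat.gcd_eq_gcd_ab (j - i) n
        rw [hcop] at hbez
        have hxeq : x = (x ^ (j - i)) ^ Nat.gcdA (j - i) n * (x ^ n) ^ Nat.gcdB (j - i) n := by
          rw [← zpow_natCast x (j - i), ← zpow_natCast x n, ← zpow_mul, ← zpow_mul,
            ← zpow_add, ← hbez]
          simp
        rw [hxeq]
        refine mul_mem (zpow_mem hT _) ?_
        rw [hn, pow_orderOf_eq_one]
        simp only [one_zpow]
        exact one_mem _
      have hinjOn : Set.InjOn (fun i : ℕ => H₀.map (c (x ^ i))) ↑(Finset.range p) := by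
        intro i hi j hj hij
        simp only [Finset.coe_range, Set.mem_Iio] at hi hj
        rcases le_total i j with h | h
        · exact step i j h hj hij
        · exact (step j i h hi hij.symm).symm
      have hne : ∀ i < p, H₀.map (c (x ^ i)) ≠ Subgroup.zpowers x := by
        intro i hi hEq
        apply hH₀
        have h1 := congrArg (Subgroup.map (c (x ^ i)⁻¹)) hEq
        rw [map_c_map_c, inv_mul_cancel, map_c_one, map_c_zpowers] at h1
        have h2 : (x ^ i)⁻¹ * x * ((x ^ i)⁻¹)⁻¹ = x := by group
        rw [h2] at h1
        rw [h1]
        exact Subgroup.le_normalizer (Subgroup.mem_zpowers x)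
      have hsubset : insert (Subgroup.zpowers x)
          ((Finset.range p).image (fun i => H₀.map (c (x ^ i)))) ⊆ XF := by
        intro A hAmem
        rcases Finset.mem_insert.mp hAmem with rfl | hAmem
        · exact hXfin.mem_toFinset.mpr hxX
        · obtain ⟨i, _, rfl⟩ := Finset.mem_image.mp hAmem
          exact hXfin.mem_toFinset.mpr (hmemψ i)
      have hcard1 : ((Finset.range p).image (fun i => H₀.map (c (x ^ i)))).card = p := by
        rw [Finset.card_image_of_injOn hinjOn, Finset.card_range]
      have hnotmem : Subgroup.zpowers x ∉
          (Finset.range p).image (fun i => H₀.map (c (x ^ i))) := by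
        intro hmem
        obtain ⟨i, hi, hEq⟩ := Finset.mem_image.mp hmem
        exact hne i (Finset.mem_range.mp hi) hEq
      calc p + 1
          = (insert (Subgroup.zpowers x)
              ((Finset.range p).image (fun i => H₀.map (c (x ^ i))))).card := by
            rw [Finset.card_insert_of_notMem hnotmem, hcard1]
        _ ≤ XF.card := Finset.card_le_card hsubset
  -- final assembly
  have hScard : Nat.card S = DF.card := by
    rw [Nat.card_coe_set_eq, Set.ncard_eq_toFinset_card S hSfin]
  have h2 : (p + 1) * (p - 1) ≤ DF.card :=
    le_trans (Nat.mul_le_mul_right _ hXcard) hlow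
  have h3 : p ^ 2 - 1 = (p + 1) * (p - 1) := by
    have hp1 : 1 ≤ p := hp.one_lt.le
    obtain ⟨k, rfl⟩ : ∃ k, p = k + 1 := ⟨p - 1, by omega⟩
    have e1 : (k + 1) ^ 2 = k * k + 2 * k + 1 := by ring
    have e2 : (k + 1 + 1) * (k + 1 - 1) = k * k + 2 * k := by
      simp only [Nat.add_sub_cancel]
      ring
    rw [e1, e2]
    omega
  show p ^ 2 - 1 ≤ Nat.card S
  rw [hScard, h3]
  exact h2
end

section
/- Let n ≥ 5 and let π be a set of primes containing 2. If x ∈ S_n is a transposition, then |C_{S_n}(x)_π| / |(S_n)_π| < 1/2, i.e., strictly fewer than half the π-elements of S_n commute with x. -/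
open Finset Equiv Equiv.Perm

private lemma commute_swap_cases' {α : Type*} [DecidableEq α] {a b : α} (hab : a ≠ b)
    {h : Equiv.Perm α} (hc : Commute (Equiv.swap a b) h) :
    (h a = a ∧ h b = b) ∨ (h a = b ∧ h b = a) := by
  have key : Equiv.swap a b (h a) = h b := by
    have := congrArg (fun σ : Equiv.Perm α => σ a) hc.eq
    simpa [Equiv.Perm.mul_apply] using this
  by_cases h1 : h a = a
  · left
    refine ⟨h1, ?_⟩
    rw [h1, Equiv.swap_apply_left] at key
    exact key.symm
  by_cases h2 : h a = b
  · right
    refine ⟨h2, ?_⟩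
    rw [h2, Equiv.swap_apply_right] at key
    exact key.symm
  · exfalso
    rw [Equiv.swap_apply_of_ne_of_ne h1 h2] at key
    exact hab (h.injective key)

private lemma disjoint_swap' {α : Type*} [DecidableEq α] {a c b d : α} (hba : b ≠ a) (hbc : b ≠ c)
    (hda : d ≠ a) (hdc : d ≠ c) :
    Equiv.Perm.Disjoint (Equiv.swap a c) (Equiv.swap b d) := by
  intro p
  by_cases hpb : p = b
  · left; subst hpb; exact Equiv.swap_apply_of_ne_of_ne hba hbc
  by_cases hpd : p = d
  · left; subst hpd; exact Equiv.swap_apply_of_ne_of_ne hda hdc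
  · right; exact Equiv.swap_apply_of_ne_of_ne hpb hpd

private lemma pow_four_eq_one' {G : Type*} [Group G] {u r : G} (h2 : u * u = r)
    (hr : r * r = 1) : u ^ 4 = 1 := by
  have h : u ^ 4 = (u * u) * (u * u) := by rw [show (4:ℕ) = 2*2 from rfl, pow_mul, sq, sq]
  rw [h, h2, hr]

private lemma invol_mul' {G : Type*} [Group G] {u v : G} (h : Commute u v) (hu : u * u = 1)
    (hv : v * v = 1) : (u * v) * (u * v) = 1 := by
  rw [mul_assoc, ← mul_assoc v, ← h.eq, mul_assoc, hv, mul_one, hu]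

private lemma pi_mul_aux {α : Type*} [DecidableEq α] [Fintype α] {π : Set ℕ} (h2π : 2 ∈ π)
    {g s t : Equiv.Perm α} (B : Finset α)
    (hgs : ∀ p ∈ B, g (s p) = p)
    (hsB : ∀ p ∉ B, s p = p) (htB : ∀ p ∉ B, t p = p)
    (hsinv : s⁻¹ = s) (hst4 : (s * t) ^ 4 = 1)
    (hg : ∀ q : ℕ, q.Prime → q ∣ orderOf g → q ∈ π) :
    ∀ q : ℕ, q.Prime → q ∣ orderOf (g * t) → q ∈ π := by
  have hd1 : Equiv.Perm.Disjoint (g * s⁻¹) s := by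
    intro p
    by_cases hp : p ∈ B
    · left
      rw [Equiv.Perm.mul_apply, hsinv]
      exact hgs p hp
    · right; exact hsB p hp
  have hd2 : Equiv.Perm.Disjoint (g * s⁻¹) (s * t) := by
    intro p
    by_cases hp : p ∈ B
    · left
      rw [Equiv.Perm.mul_apply, hsinv]
      exact hgs p hp
    · right
      rw [Equiv.Perm.mul_apply, htB p hp]
      exact hsB p hp
  have ho1 : orderOf (g * s⁻¹) ∣ orderOf g :=
    calc orderOf (g * s⁻¹) ∣ Nat.lcm (orderOf (g * s⁻¹)) (orderOf s) := Nat.dvd_lcm_left _ _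
    _ = orderOf ((g * s⁻¹) * s) := (hd1.orderOf).symm
    _ = orderOf g := by rw [inv_mul_cancel_right]
  have hkey : orderOf (g * t) = Nat.lcm (orderOf (g * s⁻¹)) (orderOf (s * t)) := by
    have h : (g * s⁻¹) * (s * t) = g * t := by group
    rw [← h, hd2.orderOf]
  intro q hq hqd
  rw [hkey] at hqd
  have hqm : q ∣ orderOf (g * s⁻¹) * orderOf (s * t) := hqd.trans (Nat.lcm_dvd_mul _ _)
  rcases (Nat.Prime.dvd_mul hq).mp hqm with h | h
  · exact hg q hq (h.trans ho1)
  · have h4 : orderOf (s * t) ∣ 4 := orderOf_dvd_of_pow_eq_one hst4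
    have hq4 : q ∣ 2 ^ 2 := h.trans h4
    have hq2 : q = 2 := (Nat.prime_dvd_prime_iff_eq hq Nat.prime_two).mp
      (hq.dvd_of_dvd_pow hq4)
    rwa [hq2]

/-- Let `n ≥ 5` and let `π` be a set of primes containing `2`. If `x ∈ S_n` is
a transposition, then strictly fewer than half of the `π`-elements of `S_n`
commute with `x`. -/
theorem transposition_centralizer_pi_ratio_lt_half {n : ℕ} (hn : 5 ≤ n)
    (π : Set ℕ) (hπ : ∀ q ∈ π, Nat.Prime q) (h2π : 2 ∈ π)
    (x : Equiv.Perm (Fin n)) (hx : x.IsSwap) :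
    (Nat.card {g : Equiv.Perm (Fin n) | Commute x g ∧
        ∀ q : ℕ, q.Prime → q ∣ orderOf g → q ∈ π} : ℝ)
      / (Nat.card {g : Equiv.Perm (Fin n) |
          ∀ q : ℕ, q.Prime → q ∣ orderOf g → q ∈ π} : ℝ)
      < 1 / 2 := by
  classical
  obtain ⟨a, b, hab, rfl⟩ := hx
  -- pick three extra points c, d, e
  set T : Finset (Fin n) := univ \ {a, b} with hT
  have hTcard : 3 ≤ T.card := by
    have h1 : ({a, b} : Finset (Fin n)).card ≤ 2 := card_insert_le _ _ |>.trans (by simp)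
    have h2 : T.card = n - ({a, b} : Finset (Fin n)).card := by
      rw [hT, card_sdiff_of_subset (subset_univ _), card_univ, Fintype.card_fin]
    omega
  obtain ⟨c, hcT⟩ : T.Nonempty := card_pos.mp (by omega)
  obtain ⟨d, hd', e, he', hde⟩ := Finset.one_lt_card.mp
    (by rw [Finset.card_erase_of_mem hcT]; omega : 1 < (T.erase c).card)
  have hdc : d ≠ c := (Finset.mem_erase.mp hd').1
  have hdT : d ∈ T := (Finset.mem_erase.mp hd').2
  have hec : e ≠ c := (Finset.mem_erase.mp he').1
  have heT : e ∈ T := (Finset.mem_erase.mp he').2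
  have hmem : ∀ p ∈ T, p ≠ a ∧ p ≠ b := by
    intro p hp
    rw [hT, Finset.mem_sdiff, Finset.mem_insert, Finset.mem_singleton] at hp
    exact ⟨fun h => hp.2 (Or.inl h), fun h => hp.2 (Or.inr h)⟩
  obtain ⟨hca, hcb⟩ := hmem c hcT
  obtain ⟨hda, hdb⟩ := hmem d hdT
  obtain ⟨hea, heb⟩ := hmem e heT
  have hcd : c ≠ d := fun h => hdc h.symm
  -- notation
  set X : Equiv.Perm (Fin n) := Equiv.swap a b with hX
  set Y : Equiv.Perm (Fin n) := Equiv.swap c d with hY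
  set t : Equiv.Perm (Fin n) := Equiv.swap a c * Equiv.swap b d with ht
  set w : Equiv.Perm (Fin n) := Equiv.swap a e * Equiv.swap b c with hw
  set P : Equiv.Perm (Fin n) → Prop := fun g => ∀ q : ℕ, q.Prime → q ∣ orderOf g → q ∈ π
    with hP
  -- basic facts about t, w
  have hdj_ac_bd : Equiv.Perm.Disjoint (Equiv.swap a c) (Equiv.swap b d) :=
    disjoint_swap' (fun h => hab h.symm) (fun h => hcb h.symm) hda hdc
  have hdj_ab_cd : Equiv.Perm.Disjoint (Equiv.swap a b) (Equiv.swap c d) :=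
    disjoint_swap' hca hcb hda hdb
  have hdj_ae_bc : Equiv.Perm.Disjoint (Equiv.swap a e) (Equiv.swap b c) :=
    disjoint_swap' (fun h => hab h.symm) (fun h => heb h.symm) hca (fun h => hec h.symm)
  have ht2 : t * t = 1 := invol_mul' hdj_ac_bd.commute (Equiv.swap_mul_self _ _)
    (Equiv.swap_mul_self _ _)
  have hw2 : w * w = 1 := invol_mul' hdj_ae_bc.commute (Equiv.swap_mul_self _ _)
    (Equiv.swap_mul_self _ _)
  have hX2 : X * X = 1 := Equiv.swap_mul_self _ _
  have hY2 : Y * Y = 1 := Equiv.swap_mul_self _ _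
  have hcommXY : Commute X Y := hdj_ab_cd.commute
  have hXY2 : (X * Y) * (X * Y) = 1 := invol_mul' hcommXY hX2 hY2
  have htinv : t⁻¹ = t := by rw [inv_eq_iff_mul_eq_one, ht2]
  have hta : t a = c := by
    rw [ht, Equiv.Perm.mul_apply, Equiv.swap_apply_of_ne_of_ne hab (fun h => hda h.symm),
      Equiv.swap_apply_left]
  have htb : t b = d := by
    rw [ht, Equiv.Perm.mul_apply, Equiv.swap_apply_left,
      Equiv.swap_apply_of_ne_of_ne hda hdc]
  have htc : t c = a := by
    rw [ht, Equiv.Perm.mul_apply, Equiv.swap_apply_of_ne_of_ne hcb hcd,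
      Equiv.swap_apply_right]
  have htd : t d = b := by
    rw [ht, Equiv.Perm.mul_apply, Equiv.swap_apply_right,
      Equiv.swap_apply_of_ne_of_ne (fun h => hab h.symm) (fun h => hcb h.symm)]
  have hwa : w a = e := by
    rw [hw, Equiv.Perm.mul_apply, Equiv.swap_apply_of_ne_of_ne hab (fun h => hca h.symm), Equiv.swap_apply_left]
  have hwc : w c = b := by
    rw [hw, Equiv.Perm.mul_apply, Equiv.swap_apply_right,
      Equiv.swap_apply_of_ne_of_ne (fun h => hab h.symm) (fun h => heb h.symm)]
  have hconj_X : t * X * t⁻¹ = Y := by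
    rw [hX, hY, ← Equiv.swap_apply_apply, hta, htb]
  have hconj_Y : t * Y * t⁻¹ = X := by
    rw [hX, hY, ← Equiv.swap_apply_apply, htc, htd]

  -- the support set
  set B4 : Finset (Fin n) := {a, b, c, d} with hB4
  have hmemB4 : ∀ p : Fin n, p ∈ B4 ↔ (p = a ∨ p = b ∨ p = c ∨ p = d) := by
    intro p
    simp [hB4, Finset.mem_insert, Finset.mem_singleton]
  have htB4 : ∀ p ∉ B4, t p = p := by
    intro p hp
    rw [hmemB4] at hp
    push_neg at hp
    obtain ⟨hpa, hpb, hpc, hpd⟩ := hp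
    rw [ht, Equiv.Perm.mul_apply, Equiv.swap_apply_of_ne_of_ne hpb hpd,
      Equiv.swap_apply_of_ne_of_ne hpa hpc]
  -- conjugation of X * Y by t
  have hconj_XY : t * (X * Y) * t⁻¹ = Y * X := by
    rw [show t * (X * Y) * t⁻¹ = (t * X * t⁻¹) * (t * Y * t⁻¹) by group, hconj_X, hconj_Y]
  -- the decomposition existence
  have hSig : ∀ g : Equiv.Perm (Fin n), Commute X g → Commute Y g →
      ∃ s : Equiv.Perm (Fin n), s⁻¹ = s ∧ (s * t) ^ 4 = 1 ∧
        (∀ p ∈ B4, g (s p) = p) ∧ ∀ p ∉ B4, s p = p := by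
    intro g hXg hYg
    rcases commute_swap_cases' hab hXg with ⟨ha1, hb1⟩ | ⟨ha1, hb1⟩ <;>
      rcases commute_swap_cases' hcd hYg with ⟨hc1, hd1⟩ | ⟨hc1, hd1⟩
    · -- g fixes a, b, c, d : s = 1
      refine ⟨1, by simp, ?_, ?_, fun p _ => rfl⟩
      · rw [one_mul]
        exact pow_four_eq_one' ht2 (one_mul 1)
      · intro p hp
        rw [hmemB4] at hp
        rcases hp with rfl | rfl | rfl | rfl <;>
          simp only [Equiv.Perm.one_apply] <;> assumption
    · -- g swaps c, d and fixes a, b : s = Y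
      refine ⟨Y, by rw [hY]; exact Equiv.swap_inv _ _, ?_, ?_, ?_⟩
      · refine pow_four_eq_one' ?_ (invol_mul' hcommXY.symm hY2 hX2)
        rw [show (Y * t) * (Y * t) = Y * (t * Y * t⁻¹) * (t * t) by group, hconj_Y, ht2, mul_one]
      · intro p hp
        rw [hmemB4] at hp
        rcases hp with rfl | rfl | rfl | rfl
        · rw [hY, Equiv.swap_apply_of_ne_of_ne (fun h => hca h.symm) (fun h => hda h.symm)]
          exact ha1
        · rw [hY, Equiv.swap_apply_of_ne_of_ne (fun h => hcb h.symm) (fun h => hdb h.symm)]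
          exact hb1
        · rw [hY, Equiv.swap_apply_left]
          exact hd1
        · rw [hY, Equiv.swap_apply_right]
          exact hc1
      · intro p hp
        rw [hmemB4] at hp
        push_neg at hp
        rw [hY, Equiv.swap_apply_of_ne_of_ne hp.2.2.1 hp.2.2.2]
    · -- g swaps a, b and fixes c, d : s = X
      refine ⟨X, by rw [hX]; exact Equiv.swap_inv _ _, ?_, ?_, ?_⟩
      · refine pow_four_eq_one' ?_ hXY2
        rw [show (X * t) * (X * t) = X * (t * X * t⁻¹) * (t * t) by group, hconj_X, ht2, mul_one]
      · intro p hp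
        rw [hmemB4] at hp
        rcases hp with rfl | rfl | rfl | rfl
        · rw [hX, Equiv.swap_apply_left]
          exact hb1
        · rw [hX, Equiv.swap_apply_right]
          exact ha1
        · rw [hX, Equiv.swap_apply_of_ne_of_ne hca hcb]
          exact hc1
        · rw [hX, Equiv.swap_apply_of_ne_of_ne hda hdb]
          exact hd1
      · intro p hp
        rw [hmemB4] at hp
        push_neg at hp
        rw [hX, Equiv.swap_apply_of_ne_of_ne hp.1 hp.2.1]
    · -- g swaps a, b and swaps c, d : s = X * Y
      refine ⟨X * Y, ?_, ?_, ?_, ?_⟩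
      · rw [mul_inv_rev, hX, hY, Equiv.swap_inv, Equiv.swap_inv]
        exact hcommXY.eq.symm
      · refine pow_four_eq_one' ?_ (one_mul 1)
        rw [show ((X * Y) * t) * ((X * Y) * t) = (X * Y) * (t * (X * Y) * t⁻¹) * (t * t) by group,
          hconj_XY, ht2, mul_one,
          show (X * Y) * (Y * X) = X * (Y * Y) * X by group, hY2, mul_one, hX2]
      · intro p hp
        rw [hmemB4] at hp
        rcases hp with rfl | rfl | rfl | rfl
        · rw [Equiv.Perm.mul_apply, hY,
            Equiv.swap_apply_of_ne_of_ne (fun h => hca h.symm) (fun h => hda h.symm),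
            hX, Equiv.swap_apply_left]
          exact hb1
        · rw [Equiv.Perm.mul_apply, hY,
            Equiv.swap_apply_of_ne_of_ne (fun h => hcb h.symm) (fun h => hdb h.symm),
            hX, Equiv.swap_apply_right]
          exact ha1
        · rw [Equiv.Perm.mul_apply, hY, Equiv.swap_apply_left, hX,
            Equiv.swap_apply_of_ne_of_ne hda hdb]
          exact hd1
        · rw [Equiv.Perm.mul_apply, hY, Equiv.swap_apply_right, hX,
            Equiv.swap_apply_of_ne_of_ne hca hcb]
          exact hc1
      · intro p hp
        rw [hmemB4] at hp
        push_neg at hp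
        rw [Equiv.Perm.mul_apply, hY, Equiv.swap_apply_of_ne_of_ne hp.2.2.1 hp.2.2.2,
          hX, Equiv.swap_apply_of_ne_of_ne hp.1 hp.2.1]

  -- the three finsets
  set SA : Finset (Equiv.Perm (Fin n)) := univ.filter (fun g => Commute X g ∧ P g) with hSA
  set SB : Finset (Equiv.Perm (Fin n)) := univ.filter (fun g => Commute Y g ∧ P g) with hSB
  set SS : Finset (Equiv.Perm (Fin n)) := univ.filter P with hSS
  have hsubA : SA ⊆ SS := by
    intro g hg
    rw [hSA, Finset.mem_filter] at hg
    rw [hSS, Finset.mem_filter]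
    exact ⟨hg.1, hg.2.2⟩
  have hsubB : SB ⊆ SS := by
    intro g hg
    rw [hSB, Finset.mem_filter] at hg
    rw [hSS, Finset.mem_filter]
    exact ⟨hg.1, hg.2.2⟩
  -- conjugation preserves P
  have hPconj : ∀ u g : Equiv.Perm (Fin n), P g → P (u * g * u⁻¹) := by
    intro u g hg q hq hqd
    have ho : orderOf (u * g * u⁻¹) = orderOf g := by
      have := MulEquiv.orderOf_eq (MulAut.conj u) g
      simpa [MulAut.conj_apply] using this
    exact hg q hq (ho ▸ hqd)
  have hconj2 : ∀ g : Equiv.Perm (Fin n), t * (t * g * t⁻¹) * t⁻¹ = g := by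
    intro g
    rw [htinv, show t * (t * g * t) * t = (t * t) * g * (t * t) by group, ht2, one_mul, mul_one]
  -- |SA| = |SB| via conjugation by t
  have hAB : SA.card = SB.card := by
    apply Finset.card_bij' (fun g _ => t * g * t⁻¹) (fun g _ => t * g * t⁻¹)
    · intro g hg
      rw [hSA, Finset.mem_filter] at hg
      rw [hSB, Finset.mem_filter]
      refine ⟨mem_univ _, ?_, hPconj t g hg.2.2⟩
      have := hg.2.1.map (MulAut.conj t).toMonoidHom
      simpa [MulAut.conj_apply, hconj_X] using this
    · intro g hg
      rw [hSB, Finset.mem_filter] at hg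
      rw [hSA, Finset.mem_filter]
      refine ⟨mem_univ _, ?_, hPconj t g hg.2.2⟩
      have := hg.2.1.map (MulAut.conj t).toMonoidHom
      simpa [MulAut.conj_apply, hconj_Y] using this
    · intro g _
      exact hconj2 g
    · intro g _
      exact hconj2 g
  -- w is a pi-element commuting with neither X nor Y
  have hPw : P w := by
    intro q hq hqd
    have h2 : orderOf w ∣ 2 := orderOf_dvd_of_pow_eq_one (by rw [pow_two, hw2])
    have : q = 2 := (Nat.prime_dvd_prime_iff_eq hq Nat.prime_two).mp (hqd.trans h2)
    rwa [this]
  have hwmem : w ∈ SS \ (SA ∪ SB) := by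
    rw [Finset.mem_sdiff, Finset.mem_union]
    refine ⟨by rw [hSS, Finset.mem_filter]; exact ⟨mem_univ _, hPw⟩, ?_⟩
    rintro (hm | hm)
    · rw [hSA, Finset.mem_filter] at hm
      rcases commute_swap_cases' hab hm.2.1 with ⟨h1, -⟩ | ⟨h1, -⟩
      · rw [hwa] at h1; exact hea h1
      · rw [hwa] at h1; exact heb h1
    · rw [hSB, Finset.mem_filter] at hm
      rcases commute_swap_cases' hcd hm.2.1 with ⟨h1, -⟩ | ⟨h1, -⟩
      · rw [hwc] at h1; exact hcb h1.symm
      · rw [hwc] at h1; exact hdb h1.symm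
  -- the injection g ↦ g * t from SA ∩ SB into (SS \ (SA ∪ SB)).erase w
  have hψ : ∀ g ∈ SA ∩ SB, g * t ∈ (SS \ (SA ∪ SB)).erase w := by
    intro g hg
    rw [Finset.mem_inter, hSA, hSB, Finset.mem_filter, Finset.mem_filter] at hg
    obtain ⟨⟨-, hXg, hPg⟩, ⟨-, hYg, -⟩⟩ := hg
    obtain ⟨s, hsinv, hst4, hgs, hsfix⟩ := hSig g hXg hYg
    have hPgt : P (g * t) := pi_mul_aux h2π B4 hgs hsfix htB4 hsinv hst4 hPg
    have hgta : (g * t) a = g c := by rw [Equiv.Perm.mul_apply, hta]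
    have hgtc : (g * t) c = g a := by rw [Equiv.Perm.mul_apply, htc]
    have hga : g a = a ∨ g a = b := by
      rcases commute_swap_cases' hab hXg with ⟨h1, -⟩ | ⟨h1, -⟩
      · exact Or.inl h1
      · exact Or.inr h1
    have hgc : g c = c ∨ g c = d := by
      rcases commute_swap_cases' hcd hYg with ⟨h1, -⟩ | ⟨h1, -⟩
      · exact Or.inl h1
      · exact Or.inr h1
    rw [Finset.mem_erase, Finset.mem_sdiff, Finset.mem_union]
    refine ⟨?_, by rw [hSS, Finset.mem_filter]; exact ⟨mem_univ _, hPgt⟩, ?_⟩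
    · -- g * t ≠ w
      intro h
      have : g c = e := by rw [← hgta, h, hwa]
      rcases hgc with h1 | h1 <;> rw [h1] at this
      · exact hec this.symm
      · exact hde this
    · rintro (hm | hm)
      · rw [hSA, Finset.mem_filter] at hm
        rcases commute_swap_cases' hab hm.2.1 with ⟨h1, -⟩ | ⟨h1, -⟩ <;>
          rw [hgta] at h1 <;> rcases hgc with h2 | h2 <;> rw [h2] at h1
        · exact hca h1
        · exact hda h1
        · exact hcb h1
        · exact hdb h1
      · rw [hSB, Finset.mem_filter] at hm
        rcases commute_swap_cases' hcd hm.2.1 with ⟨h1, -⟩ | ⟨h1, -⟩ <;>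
          rw [hgtc] at h1 <;> rcases hga with h2 | h2 <;> rw [h2] at h1
        · exact hca h1.symm
        · exact hcb h1.symm
        · exact hda h1.symm
        · exact hdb h1.symm
  have hinj : (SA ∩ SB).card ≤ ((SS \ (SA ∪ SB)).erase w).card :=
    Finset.card_le_card_of_injOn (· * t) hψ (fun g1 _ g2 _ h => mul_right_cancel h)
  have h5 : ((SS \ (SA ∪ SB)).erase w).card = (SS \ (SA ∪ SB)).card - 1 :=
    Finset.card_erase_of_mem hwmem
  have h6 : 0 < (SS \ (SA ∪ SB)).card := Finset.card_pos.mpr ⟨w, hwmem⟩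
  have h7 : (SA ∪ SB).card + (SA ∩ SB).card = SA.card + SB.card :=
    Finset.card_union_add_card_inter _ _
  have h8 : (SS \ (SA ∪ SB)).card + (SA ∪ SB).card = SS.card :=
    Finset.card_sdiff_add_card_eq_card (Finset.union_subset hsubA hsubB)
  have hlt : 2 * SA.card < SS.card := by omega
  -- convert Nat.card to Finset.card
  have e1 : Nat.card {g : Equiv.Perm (Fin n) | Commute X g ∧
      ∀ q : ℕ, q.Prime → q ∣ orderOf g → q ∈ π} = SA.card := by
    rw [Nat.card_eq_fintype_card, Fintype.card_subtype]
    congr 1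
  have e2 : Nat.card {g : Equiv.Perm (Fin n) |
      ∀ q : ℕ, q.Prime → q ∣ orderOf g → q ∈ π} = SS.card := by
    rw [Nat.card_eq_fintype_card, Fintype.card_subtype]
    congr 1
  rw [e1, e2]
  have hSSpos : (0 : ℝ) < (SS.card : ℝ) := by
    have : 0 < SS.card := by omega
    exact_mod_cast this
  rw [div_lt_div_iff₀ hSSpos (by norm_num : (0:ℝ) < 2), one_mul]
  exact_mod_cast (by omega : SA.card * 2 < SS.card)
end

section
/- Let n ≥ 5, x = (1,2) ∈ S_n, and for j ∈ {3,...,n} let Z_j = {τ ∈ (S_n)_π : τ(1) = j and τ(j) = 1} for a set of primes π containing 2. Then the sets Z_j are pairwise disjoint, consist of π-elements not commuting with x, each has cardinality |(S_{n-2})_π|, and consequently |(S_n)_π| ≥ n·|(S_{n-2})_π|. -/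
private lemma aux_orderOf_swap_mul {n : ℕ} {a b : Fin n} (hab : a ≠ b)
    {ρ : Equiv.Perm (Fin n)} (ha : ρ a = a) (hb : ρ b = b) :
    orderOf (Equiv.swap a b * ρ) = Nat.lcm 2 (orderOf ρ) := by
  have hd : Equiv.Perm.Disjoint (Equiv.swap a b) ρ := by
    intro x
    by_cases hx : x = a ∨ x = b
    · right; rcases hx with rfl | rfl <;> assumption
    · left; push_neg at hx; exact Equiv.swap_apply_of_ne_of_ne hx.1 hx.2
  rw [hd.orderOf,
    orderOf_eq_prime (p := 2) (by rw [pow_two, Equiv.swap_mul_self])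
      (by simpa [Equiv.swap_eq_one_iff] using hab)]

/-- Multiplying by a disjoint transposition preserves being a `π`-element when `2 ∈ π`. -/
private lemma aux_pi_swap_mul {n : ℕ} (π : Set ℕ) (h2π : 2 ∈ π) {a b : Fin n} (hab : a ≠ b)
    {ρ : Equiv.Perm (Fin n)} (ha : ρ a = a) (hb : ρ b = b) :
    (∀ q : ℕ, q.Prime → q ∣ orderOf (Equiv.swap a b * ρ) → q ∈ π) ↔
      (∀ q : ℕ, q.Prime → q ∣ orderOf ρ → q ∈ π) := by
  have ho := aux_orderOf_swap_mul hab ha hb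
  constructor
  · intro H q hq hdvd
    exact H q hq (by rw [ho]; exact hdvd.trans (Nat.dvd_lcm_right _ _))
  · intro H q hq hdvd
    rw [ho] at hdvd
    rcases (Nat.Prime.dvd_mul hq).mp (hdvd.trans (Nat.lcm_dvd_mul 2 (orderOf ρ))) with h2 | hm
    · rw [(Nat.prime_dvd_prime_iff_eq hq Nat.prime_two).mp h2]; exact h2π
    · exact H q hq hm

private lemma aux_orderOf_conj_swap {n : ℕ} (a b : Fin n) (σ : Equiv.Perm (Fin n)) :
    orderOf (Equiv.swap a b * σ * Equiv.swap a b) = orderOf σ := by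
  have h : SemiconjBy (Equiv.swap a b) σ (Equiv.swap a b * σ * Equiv.swap a b) :=
    (Equiv.mul_swap_mul_self a b (Equiv.swap a b * σ)).symm
  exact (SemiconjBy.orderOf_eq _ h).symm

private lemma card_Z {n : ℕ} [NeZero n] (π : Set ℕ) (h2π : 2 ∈ π) (j : Fin n) (hj : j ≠ 0)
    (h01 : (0 : Fin n) ≠ 1) :
    Nat.card {τ : Equiv.Perm (Fin n) | (∀ q : ℕ, q.Prime → q ∣ orderOf τ → q ∈ π) ∧
        τ 0 = j ∧ τ j = 0}
      = Nat.card {σ : Equiv.Perm (Fin n) |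
          (∀ q : ℕ, q.Prime → q ∣ orderOf σ → q ∈ π) ∧ σ 0 = 0 ∧ σ 1 = 1} := by
  set s : Equiv.Perm (Fin n) := Equiv.swap 0 j with hs
  set c : Equiv.Perm (Fin n) := Equiv.swap 1 j with hc
  have hc0 : c 0 = 0 := Equiv.swap_apply_of_ne_of_ne h01 hj.symm
  have hc1 : c 1 = j := Equiv.swap_apply_left 1 j
  have hcj : c j = 1 := Equiv.swap_apply_right 1 j
  have hs0 : s 0 = j := Equiv.swap_apply_left 0 j
  have hsj : s j = 0 := Equiv.swap_apply_right 0 j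
  apply Nat.card_congr
  refine
    { toFun := fun τ => ⟨c * (s * τ.1) * c, ?_⟩
      invFun := fun σ => ⟨s * (c * σ.1 * c), ?_⟩
      left_inv := ?_
      right_inv := ?_ }
  · -- forward membership
    obtain ⟨hP, h0, hjτ⟩ := τ.2
    have hρ0 : (s * τ.1) 0 = 0 := by
      simp only [Equiv.Perm.mul_apply, h0, hsj]
    have hρj : (s * τ.1) j = j := by
      simp only [Equiv.Perm.mul_apply, hjτ, hs0]
    have hPτ : (∀ q : ℕ, q.Prime → q ∣ orderOf (s * τ.1) → q ∈ π) := by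
      have := (aux_pi_swap_mul π h2π hj.symm hρ0 hρj)
      rw [← mul_assoc, show s * s * τ.1 = τ.1 by rw [Equiv.swap_mul_self, one_mul]] at this
      exact this.mp hP
    refine ⟨?_, ?_, ?_⟩
    · intro q hq hdvd
      rw [aux_orderOf_conj_swap] at hdvd
      exact hPτ q hq hdvd
    · show c ((s * τ.1) (c 0)) = 0
      rw [hc0, hρ0, hc0]
    · show c ((s * τ.1) (c 1)) = 1
      rw [hc1, hρj, hcj]
  · -- backward membership
    obtain ⟨hP, h0, h1⟩ := σ.2
    have hρ0 : (c * σ.1 * c) 0 = 0 := by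
      show c (σ.1 (c 0)) = 0
      rw [hc0, h0, hc0]
    have hρj : (c * σ.1 * c) j = j := by
      show c (σ.1 (c j)) = j
      rw [hcj, h1, hc1]
    have hPρ : (∀ q : ℕ, q.Prime → q ∣ orderOf (c * σ.1 * c) → q ∈ π) := by
      intro q hq hdvd
      rw [aux_orderOf_conj_swap] at hdvd
      exact hP q hq hdvd
    refine ⟨(aux_pi_swap_mul π h2π hj.symm hρ0 hρj).mpr hPρ, ?_, ?_⟩
    · simp only [Equiv.Perm.mul_apply, hρ0]; exact hs0
    · simp only [Equiv.Perm.mul_apply, hρj]; exact hsj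
  · intro τ
    ext1
    show s * (c * (c * (s * τ.1) * c) * c) = τ.1
    simp [mul_assoc, Equiv.swap_mul_self_mul, Equiv.mul_swap_mul_self, hs, hc,
      Equiv.swap_mul_self]
  · intro σ
    ext1
    show c * (s * (s * (c * σ.1 * c))) * c = σ.1
    simp [mul_assoc, Equiv.swap_mul_self_mul, Equiv.mul_swap_mul_self, hs, hc,
      Equiv.swap_mul_self]

/-- Let `n ≥ 5`, `x = (1,2) ∈ S_n` and, for `j ∉ {1,2}`, let
`Z_j = {τ ∈ (S_n)_π : τ(1) = j, τ(j) = 1}`, where `π` is a set of primes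
containing `2`. Then the `Z_j` are pairwise disjoint, consist of `π`-elements
not commuting with `x`, each has cardinality `|(S_{n-2})_π|` (identifying
`S_{n-2}` with the permutations fixing `1` and `2`), and consequently
`|(S_n)_π| ≥ n · |(S_{n-2})_π|`. -/
theorem swap_noncommuting_pi_sets {n : ℕ} [NeZero n] (hn : 5 ≤ n)
    (π : Set ℕ) (hπ : ∀ q ∈ π, Nat.Prime q) (h2π : 2 ∈ π) :
    (∀ i j : Fin n, i ≠ j →
      {τ : Equiv.Perm (Fin n) | (∀ q : ℕ, q.Prime → q ∣ orderOf τ → q ∈ π) ∧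
          τ 0 = i ∧ τ i = 0} ∩
        {τ : Equiv.Perm (Fin n) | (∀ q : ℕ, q.Prime → q ∣ orderOf τ → q ∈ π) ∧
          τ 0 = j ∧ τ j = 0} = ∅) ∧
    (∀ j : Fin n, j ≠ 0 → j ≠ 1 →
      ∀ τ ∈ {τ : Equiv.Perm (Fin n) | (∀ q : ℕ, q.Prime → q ∣ orderOf τ → q ∈ π) ∧
          τ 0 = j ∧ τ j = 0},
        (∀ q : ℕ, q.Prime → q ∣ orderOf τ → q ∈ π) ∧
          ¬ Commute τ (Equiv.swap (0 : Fin n) 1)) ∧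
    (∀ j : Fin n, j ≠ 0 → j ≠ 1 →
      Nat.card {τ : Equiv.Perm (Fin n) | (∀ q : ℕ, q.Prime → q ∣ orderOf τ → q ∈ π) ∧
          τ 0 = j ∧ τ j = 0}
        = Nat.card {σ : Equiv.Perm (Fin n) |
            (∀ q : ℕ, q.Prime → q ∣ orderOf σ → q ∈ π) ∧ σ 0 = 0 ∧ σ 1 = 1}) ∧
    n * Nat.card {σ : Equiv.Perm (Fin n) |
        (∀ q : ℕ, q.Prime → q ∣ orderOf σ → q ∈ π) ∧ σ 0 = 0 ∧ σ 1 = 1}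
      ≤ Nat.card {τ : Equiv.Perm (Fin n) | ∀ q : ℕ, q.Prime → q ∣ orderOf τ → q ∈ π} := by
  classical
  have h01 : (0 : Fin n) ≠ 1 := by
    have hv : (1 : Fin n).val = 1 := by
      rw [Fin.val_one']; exact Nat.mod_eq_of_lt (by omega)
    intro h
    rw [← h, Fin.val_zero] at hv
    exact one_ne_zero hv.symm
  refine ⟨?_, ?_, ?_, ?_⟩
  · intro i j hij
    ext τ
    simp only [Set.mem_inter_iff, Set.mem_setOf_eq, Set.mem_empty_iff_false, iff_false]
    rintro ⟨⟨-, hi, -⟩, ⟨-, hj, -⟩⟩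
    exact hij (hi.symm.trans hj)
  · intro j hj0 hj1 τ hτ
    obtain ⟨hP, h0, hjτ⟩ := hτ
    refine ⟨hP, fun hcomm => ?_⟩
    have h1 : τ (Equiv.swap (0 : Fin n) 1 0) = Equiv.swap (0 : Fin n) 1 (τ 0) := by
      rw [← Equiv.Perm.mul_apply, ← Equiv.Perm.mul_apply, hcomm]
    rw [Equiv.swap_apply_left, h0, Equiv.swap_apply_of_ne_of_ne hj0 hj1] at h1
    exact h01 (τ.injective (h1.trans h0.symm)).symm
  · intro j hj0 _
    exact card_Z π h2π j hj0 h01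
  · -- the counting argument
    set P : Equiv.Perm (Fin n) → Prop := fun τ => ∀ q : ℕ, q.Prime → q ∣ orderOf τ → q ∈ π
      with hP
    set W : Fin n → Set (Equiv.Perm (Fin n)) := fun j => {τ | P τ ∧ τ 0 = j ∧ τ j = 0} with hW
    set A : Set (Equiv.Perm (Fin n)) := {σ | P σ ∧ σ 0 = 0 ∧ σ 1 = 1} with hA
    have hA_le : ∀ j : Fin n, Nat.card A ≤ Nat.card (W j) := by
      intro j
      by_cases hj : j = 0
      · subst hj
        refine Nat.card_mono (Set.toFinite _) ?_
        rintro σ ⟨h1, h2, h3⟩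
        exact ⟨h1, h2, h2⟩
      · exact le_of_eq (card_Z π h2π j hj h01).symm
    have hfin : ∀ j : Fin n, (W j).Finite := fun j => Set.toFinite _
    set F : Fin n → Finset (Equiv.Perm (Fin n)) := fun j => (hfin j).toFinset with hF
    have hdisj : ∀ i ∈ (Finset.univ : Finset (Fin n)), ∀ j ∈ Finset.univ, i ≠ j →
        Disjoint (F i) (F j) := by
      intro i _ j _ hij
      rw [Finset.disjoint_left]
      intro τ hτi hτj
      rw [hF] at hτi hτj
      simp only [Set.Finite.mem_toFinset, hW, Set.mem_setOf_eq] at hτi hτj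
      exact hij (hτi.2.1.symm.trans hτj.2.1)
    have hcardW : ∀ j : Fin n, Nat.card (W j) = (F j).card := by
      intro j
      rw [Nat.card_coe_set_eq, Set.ncard_eq_toFinset_card (W j) (hfin j)]
    have hsub : Finset.univ.biUnion F ⊆ (Set.toFinite
        {τ : Equiv.Perm (Fin n) | P τ}).toFinset := by
      intro τ hτ
      rw [Finset.mem_biUnion] at hτ
      obtain ⟨j, -, hτ⟩ := hτ
      rw [hF] at hτ
      simp only [Set.Finite.mem_toFinset, hW, Set.mem_setOf_eq] at hτ ⊢
      exact hτ.1
    calc n * Nat.card A = ∑ _j : Fin n, Nat.card A := by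
            simp [Finset.sum_const, Finset.card_univ]
      _ ≤ ∑ j : Fin n, Nat.card (W j) := Finset.sum_le_sum fun j _ => hA_le j
      _ = ∑ j : Fin n, (F j).card := Finset.sum_congr rfl fun j _ => hcardW j
      _ = (Finset.univ.biUnion F).card := (Finset.card_biUnion hdisj).symm
      _ ≤ (Set.toFinite {τ : Equiv.Perm (Fin n) | P τ}).toFinset.card :=
            Finset.card_le_card hsub
      _ = Nat.card {τ : Equiv.Perm (Fin n) | P τ} := by
            rw [Nat.card_coe_set_eq, Set.ncard_eq_toFinset_card _ (Set.toFinite _)]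
end

section
/- Let G be a finite group and q a prime such that G has no normal Sylow q-subgroup. Then the number of q-elements of G (elements of q-power order) is at least q². -/
open Subgroup

/-- If a finite group `G` has no normal Sylow `q`-subgroup (for `q` a prime
dividing `|G|`), then the number of `q`-elements of `G` is at least `q²`. -/
theorem card_q_elements_ge_of_no_normal_sylow {G : Type*} [Group G] [Finite G]
    {q : ℕ} [Fact q.Prime] (hq : q ∣ Nat.card G)
    (h : ∀ Q : Sylow q G, ¬ (Q : Subgroup G).Normal) :
    q ^ 2 ≤ Nat.card {g : G | ∃ k : ℕ, orderOf g = q ^ k} := by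
  classical
  have hqp : q.Prime := Fact.out
  have : Fintype G := Fintype.ofFinite G
  set S : Set G := {g : G | ∃ k : ℕ, orderOf g = q ^ k} with hSdef
  have hmemS : ∀ (Q : Sylow q G) (g : G), g ∈ (Q : Subgroup G) → g ∈ S := by
    intro Q g hg
    obtain ⟨k, hk⟩ := IsPGroup.iff_orderOf.mp Q.isPGroup' ⟨g, hg⟩
    refine ⟨k, ?_⟩
    rwa [Subgroup.orderOf_mk] at hk
  by_cases h2 : q ^ 2 ∣ Nat.card G
  · -- a single Sylow subgroup has at least q² elements
    obtain ⟨Q⟩ : Nonempty (Sylow q G) := inferInstance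
    have hcard : q ^ 2 ≤ Nat.card Q := by
      rw [Sylow.card_eq_multiplicity]
      exact Nat.pow_le_pow_right hqp.pos
        ((hqp.pow_dvd_iff_le_factorization Nat.card_pos.ne').mp h2)
    refine hcard.trans (Nat.card_le_card_of_injective
      (fun x : Q => (⟨(x : G), hmemS Q x x.2⟩ : S)) ?_)
    intro a b hab
    beta_reduce at hab
    exact Subtype.ext (Subtype.mk_eq_mk.mp hab)
  · -- all Sylow subgroups have order exactly q
    have hf1 : (Nat.card G).factorization q = 1 := by
      have h1 : 1 ≤ (Nat.card G).factorization q := by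
        rw [← hqp.pow_dvd_iff_le_factorization Nat.card_pos.ne', pow_one]; exact hq
      have h2' : ¬ 2 ≤ (Nat.card G).factorization q := by
        rw [← hqp.pow_dvd_iff_le_factorization Nat.card_pos.ne']; exact h2
      omega
    have hcardQ : ∀ Q : Sylow q G, Nat.card (Q : Subgroup G) = q := by
      intro Q; rw [Sylow.card_eq_multiplicity, hf1, pow_one]
    -- two Sylow subgroups sharing a nontrivial element are equal
    have key : ∀ (Q R : Sylow q G) (g : G), g ≠ 1 →
        g ∈ (Q : Subgroup G) → g ∈ (R : Subgroup G) → Q = R := by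
      intro Q R g hg1 hgQ hgR
      have horder : orderOf g = q := by
        have hdvd : orderOf g ∣ q := by
          have := orderOf_dvd_natCard (⟨g, hgQ⟩ : (Q : Subgroup G))
          rwa [Subgroup.orderOf_mk, hcardQ Q] at this
        rcases (Nat.dvd_prime hqp).mp hdvd with h1 | h1
        · exact absurd (orderOf_eq_one_iff.mp h1) hg1
        · exact h1
      have hz : ∀ T : Sylow q G, g ∈ (T : Subgroup G) → Subgroup.zpowers g = T := by
        intro T hgT
        refine Subgroup.eq_of_le_of_card_ge (Subgroup.zpowers_le.mpr hgT) ?_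
        rw [hcardQ T, Nat.card_zpowers, horder]
      exact Sylow.ext ((hz Q hgQ).symm.trans (hz R hgR))
    set F : Sylow q G → Finset G :=
      fun Q => (((Q : Subgroup G) : Set G).toFinset).erase 1 with hF
    have hFcard : ∀ Q : Sylow q G, (F Q).card = q - 1 := by
      intro Q
      rw [hF]
      rw [Finset.card_erase_of_mem (Set.mem_toFinset.mpr (Q : Subgroup G).one_mem)]
      rw [Set.toFinset_card]
      simp only [SetLike.coe_sort_coe]
      rw [← Nat.card_eq_fintype_card, hcardQ Q]
    have hdisj : ∀ x ∈ (Finset.univ : Finset (Sylow q G)), ∀ y ∈ Finset.univ,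
        x ≠ y → Disjoint (F x) (F y) := by
      intro x _ y _ hxy
      rw [Finset.disjoint_left]
      intro g hgx hgy
      rw [hF, Finset.mem_erase, Set.mem_toFinset] at hgx hgy
      exact hxy (key x y g hgx.1 hgx.2 hgy.2)
    have hbU : ((Finset.univ : Finset (Sylow q G)).biUnion F).card
        = Fintype.card (Sylow q G) * (q - 1) := by
      rw [Finset.card_biUnion hdisj]
      simp [hFcard]
    set m := Fintype.card (Sylow q G) with hm
    have hmq : q + 1 ≤ m := by
      have hmod : m % q = 1 := by
        have := card_sylow_modEq_one q G
        rw [Nat.ModEq, Nat.card_eq_fintype_card, Nat.mod_eq_of_lt hqp.one_lt] at this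
        exact this
      have hm1 : m ≠ 1 := by
        intro hone
        obtain ⟨P⟩ : Nonempty (Sylow q G) := inferInstance
        apply h P
        rw [← Subgroup.normalizer_eq_top_iff, eq_top_iff']
        intro g
        have hsub : Subsingleton (Sylow q G) :=
          Fintype.card_le_one_iff_subsingleton.mp (by omega)
        have hPeq : g • P = P := Subsingleton.elim _ _
        exact Sylow.smul_eq_iff_mem_normalizer.mp hPeq
      have e := Nat.div_add_mod m q
      rw [hmod] at e
      have hd : m / q ≠ 0 := by
        intro h0; rw [h0, Nat.mul_zero] at e; omega
      have : q ≤ q * (m / q) := Nat.le_mul_of_pos_right q (Nat.pos_of_ne_zero hd)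
      omega
    -- the union together with 1 sits inside S
    set T : Finset G := insert 1 ((Finset.univ : Finset (Sylow q G)).biUnion F) with hT
    have hTcard : T.card = m * (q - 1) + 1 := by
      rw [hT, Finset.card_insert_of_notMem, hbU]
      simp [hF]
    have hTS : T ⊆ S.toFinset := by
      intro g hg
      rw [Set.mem_toFinset]
      rcases Finset.mem_insert.mp hg with rfl | hg
      · exact ⟨0, by simp⟩
      · obtain ⟨Q, _, hgQ⟩ := Finset.mem_biUnion.mp hg
        rw [hF, Finset.mem_erase, Set.mem_toFinset] at hgQ
        exact hmemS Q g hgQ.2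
    have hcards : T.card ≤ Nat.card S := by
      rw [Nat.card_coe_set_eq, Set.ncard_eq_toFinset_card']
      exact Finset.card_le_card hTS
    have harith : q ^ 2 ≤ m * (q - 1) + 1 := by
      obtain ⟨r, rfl⟩ := Nat.exists_eq_add_of_le hqp.two_le
      have h1 : (2 + r) - 1 = r + 1 := by omega
      rw [h1]
      have h2 : (2 + r + 1) * (r + 1) ≤ m * (r + 1) :=
        Nat.mul_le_mul_right _ (by omega)
      nlinarith
    calc q ^ 2 ≤ m * (q - 1) + 1 := harith
      _ = T.card := hTcard.symm
      _ ≤ Nat.card S := hcards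
end

section
/- Let G be a finite group, π a set of primes, and p the smallest prime in π. Suppose that for every non-trivial π-element x of G, |C_G(x)_π| ≤ |G_π|/p, and that G has no normal Hall π-subgroup (so |G_π| ≥ p²). Then Pr_π(G) ≤ (p² + p − 1)/p³, where Pr_π(G) = |{(x,y) ∈ G_π × G_π : xy=yx}| / |G_π|². -/
/-- Let `p` be the smallest prime in a set of primes `π`. If every non-trivial
`π`-element `x` of the finite group `G` satisfies `|C_G(x)_π| ≤ |G_π|/p`, and
`G` has no normal Hall `π`-subgroup (so that `|G_π| ≥ p²`), then
`Pr_π(G) ≤ (p² + p - 1)/p³`. -/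
theorem pr_pi_le_bound {G : Type*} [Group G] [Finite G]
    (π : Set ℕ) (hπ : ∀ q ∈ π, Nat.Prime q)
    {p : ℕ} (hpπ : p ∈ π) (hpmin : ∀ q ∈ π, p ≤ q)
    (hcent : ∀ x : G, x ≠ 1 → (∀ q : ℕ, q.Prime → q ∣ orderOf x → q ∈ π) →
      (Nat.card {y : G | Commute x y ∧ ∀ q : ℕ, q.Prime → q ∣ orderOf y → q ∈ π} : ℝ)
        ≤ (Nat.card {g : G | ∀ q : ℕ, q.Prime → q ∣ orderOf g → q ∈ π} : ℝ) / p)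
    (hHall : ¬ ∃ H : Subgroup G, H.Normal ∧
      (∀ q : ℕ, q.Prime → q ∣ Nat.card H → q ∈ π) ∧
      (∀ q : ℕ, q.Prime → q ∣ H.index → q ∉ π)) :
    (Nat.card {z : G × G | (∀ q : ℕ, q.Prime → q ∣ orderOf z.1 → q ∈ π) ∧
        (∀ q : ℕ, q.Prime → q ∣ orderOf z.2 → q ∈ π) ∧ z.1 * z.2 = z.2 * z.1} : ℝ)
      / (Nat.card {g : G | ∀ q : ℕ, q.Prime → q ∣ orderOf g → q ∈ π} : ℝ) ^ 2
      ≤ (p ^ 2 + p - 1) / p ^ 3 := by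
  classical
  have := Fintype.ofFinite G
  have hp : p.Prime := hπ p hpπ
  have hp2 : 2 ≤ p := hp.two_le
  -- the π-element predicate
  set Pi : G → Prop := fun g => ∀ q : ℕ, q.Prime → q ∣ orderOf g → q ∈ π with hPidef
  have hPi1 : Pi 1 := by
    intro q hq hdvd
    simp only [orderOf_one, Nat.dvd_one] at hdvd
    exact absurd (hdvd ▸ hq) Nat.not_prime_one
  -- there exists a nontrivial π-element
  have hex : ∃ x : G, x ≠ 1 ∧ Pi x := by
    by_contra h
    push_neg at h
    refine hHall ⟨⊥, inferInstance, ?_, ?_⟩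
    · intro q hq hdvd
      rw [Subgroup.card_bot, Nat.dvd_one] at hdvd
      exact absurd (hdvd ▸ hq) Nat.not_prime_one
    · intro q hq hdvd hqπ
      rw [Subgroup.index_bot] at hdvd
      haveI : Fact q.Prime := ⟨hq⟩
      obtain ⟨x, hx⟩ := exists_prime_orderOf_dvd_card' q hdvd
      have hx1 : x ≠ 1 := by
        intro h1
        rw [h1, orderOf_one] at hx
        exact Nat.not_prime_one (hx ▸ hq)
      refine h x hx1 ?_
      intro r hr hrdvd
      rw [hx] at hrdvd
      rwa [(Nat.prime_dvd_prime_iff_eq hr hq).mp hrdvd]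
  obtain ⟨x₀, hx₀ne, hx₀Pi⟩ := hex
  -- notation for cardinalities
  set S : Finset G := Finset.univ.filter Pi with hSdef
  have hcard : Nat.card {g : G | Pi g} = S.card := by
    rw [Nat.card_eq_fintype_card]
    simp [hSdef, Fintype.card_subtype]
  have h1S : (1 : G) ∈ S := by
    rw [hSdef, Finset.mem_filter]; exact ⟨Finset.mem_univ _, hPi1⟩
  have hSpos : 0 < S.card := Finset.card_pos.mpr ⟨1, h1S⟩
  set N : ℝ := (S.card : ℝ) with hNdef
  have hN1 : (1 : ℝ) ≤ N := by
    have h1 : 1 ≤ S.card := hSpos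
    rw [hNdef]
    exact_mod_cast h1
  -- centralizer counts
  set f : G → ℕ := fun x => (Finset.univ.filter fun y => Commute x y ∧ Pi y).card with hfdef
  have hcardC : ∀ x : G, Nat.card {y : G | Commute x y ∧ Pi y} = f x := by
    intro x
    rw [Nat.card_eq_fintype_card]
    simp [hfdef, Fintype.card_subtype]
  -- N ≥ p^2
  have hNp2 : (p : ℝ) * p ≤ N := by
    have hcx := hcent x₀ hx₀ne hx₀Pi
    rw [hcardC, hcard] at hcx
    -- orderOf x₀ ≤ f x₀
    have hord : orderOf x₀ ≤ f x₀ := by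
      have hinj : Function.Injective (fun k : Fin (orderOf x₀) =>
          (⟨x₀ ^ (k : ℕ), by
            constructor
            · exact (Commute.self_pow x₀ (k : ℕ))
            · intro q hq hdvd
              exact hx₀Pi q hq (hdvd.trans (orderOf_pow_dvd _))⟩ :
            {y : G // Commute x₀ y ∧ Pi y})) := by
        intro i j hij
        have := congrArg Subtype.val hij
        exact Fin.ext (pow_injOn_Iio_orderOf i.2 j.2 this)
      have := Nat.card_le_card_of_injective _ hinj
      simpa [Nat.card_eq_fintype_card, Fintype.card_subtype, hfdef] using this
    have hpord : p ≤ orderOf x₀ := by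
      have hordne : orderOf x₀ ≠ 1 := by
        simpa [orderOf_eq_one_iff] using hx₀ne
      have hq : (orderOf x₀).minFac.Prime := Nat.minFac_prime hordne
      have hqπ : (orderOf x₀).minFac ∈ π := hx₀Pi _ hq (Nat.minFac_dvd _)
      calc p ≤ (orderOf x₀).minFac := hpmin _ hqπ
        _ ≤ orderOf x₀ := Nat.le_of_dvd (orderOf_pos x₀) (Nat.minFac_dvd _)
    have h1 : (p : ℝ) ≤ (f x₀ : ℝ) := by exact_mod_cast hpord.trans hord
    have h2 : (f x₀ : ℝ) ≤ N / p := hcx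
    have hppos : (0 : ℝ) < p := by positivity
    have := h1.trans h2
    rw [le_div_iff₀ hppos] at this
    linarith
  -- counting pairs
  set T : Finset (G × G) := Finset.univ.filter
    (fun z : G × G => Pi z.1 ∧ Pi z.2 ∧ z.1 * z.2 = z.2 * z.1) with hTdef
  have hcardT : Nat.card {z : G × G | Pi z.1 ∧ Pi z.2 ∧ z.1 * z.2 = z.2 * z.1} = T.card := by
    rw [Nat.card_eq_fintype_card]
    simp [hTdef, Fintype.card_subtype]
  have hTsum : T.card = ∑ x ∈ S, f x := by
    rw [Finset.card_eq_sum_card_fiberwise (f := Prod.fst) (t := S)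
      (by intro z hz
          rw [hTdef, Finset.mem_coe, Finset.mem_filter] at hz
          rw [hSdef, Finset.mem_coe, Finset.mem_filter]
          exact ⟨Finset.mem_univ _, hz.2.1⟩)]
    refine Finset.sum_congr rfl fun x hx => ?_
    have hxPi : Pi x := by
      rw [hSdef, Finset.mem_filter] at hx; exact hx.2
    refine Finset.card_bij (fun z _ => z.2) ?_ ?_ ?_
    · intro z hz
      simp only [hTdef, Finset.mem_filter, Finset.mem_univ, true_and] at hz
      obtain ⟨⟨h1, h2, h3⟩, h4⟩ := hz
      simp only [Finset.mem_filter, Finset.mem_univ, true_and]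
      refine ⟨?_, h2⟩
      rw [← h4]; exact h3
    · intro z hz w hw hzw
      simp only [hTdef, Finset.mem_filter] at hz hw
      exact Prod.ext (hz.2.trans hw.2.symm) hzw
    · intro y hy
      simp only [Finset.mem_filter, Finset.mem_univ, true_and] at hy
      refine ⟨(x, y), ?_, rfl⟩
      rw [Finset.mem_filter]
      refine ⟨?_, rfl⟩
      rw [hTdef, Finset.mem_filter]
      exact ⟨Finset.mem_univ _, hxPi, hy.2, hy.1⟩
  -- bound the sum
  have hf1 : f 1 = S.card := by
    simp [hfdef, hSdef, Commute.one_left]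
  have hsum_bound : (T.card : ℝ) ≤ N + (N - 1) * (N / p) := by
    rw [hTsum]
    push_cast
    rw [← Finset.add_sum_erase _ _ h1S, hf1]
    have : ∑ x ∈ S.erase 1, (f x : ℝ) ≤ ∑ x ∈ S.erase 1, N / p := by
      refine Finset.sum_le_sum fun x hx => ?_
      rw [Finset.mem_erase] at hx
      obtain ⟨hxne, hxS⟩ := hx
      have hxPi : Pi x := by
        rw [hSdef, Finset.mem_filter] at hxS
        exact hxS.2
      have hh := hcent x hxne hxPi
      rwa [hcardC, hcard] at hh
    rw [Finset.sum_const, nsmul_eq_mul, Finset.card_erase_of_mem h1S] at this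
    have hcast : ((S.card - 1 : ℕ) : ℝ) = N - 1 := by
      have := hSpos
      push_cast [Nat.cast_sub hSpos]
      ring
    rw [hcast] at this
    rw [hNdef] at this ⊢
    linarith
  -- final algebra
  have hgoalT : Nat.card {z : G × G | (∀ q : ℕ, q.Prime → q ∣ orderOf z.1 → q ∈ π) ∧
      (∀ q : ℕ, q.Prime → q ∣ orderOf z.2 → q ∈ π) ∧ z.1 * z.2 = z.2 * z.1} = T.card := hcardT
  have hgoalS : Nat.card {g : G | ∀ q : ℕ, q.Prime → q ∣ orderOf g → q ∈ π} = S.card := hcard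
  rw [hgoalT, hgoalS, ← hNdef]
  have hppos : (0 : ℝ) < p := by positivity
  have hNpos : (0 : ℝ) < N := by linarith
  rw [div_le_div_iff₀ (by positivity) (by positivity)]
  have key : (N + (N - 1) * (N / p)) * (p : ℝ) ^ 3 ≤ ((p : ℝ) ^ 2 + p - 1) * N ^ 2 := by
    have h : (N + (N - 1) * (N / p)) * (p : ℝ) ^ 3
        = N * p ^ 3 + (N - 1) * N * p ^ 2 := by
      field_simp
    rw [h]
    have hp1 : (1 : ℝ) ≤ (p : ℝ) := by exact_mod_cast hp.one_le
    have hkey : (0 : ℝ) ≤ (N - (p : ℝ) * p) * (N * ((p : ℝ) - 1)) :=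
      mul_nonneg (by linarith) (mul_nonneg (by linarith) (by linarith))
    nlinarith [hkey]
  calc (T.card : ℝ) * (p : ℝ) ^ 3 ≤ (N + (N - 1) * (N / p)) * (p : ℝ) ^ 3 := by
        apply mul_le_mul_of_nonneg_right hsum_bound (by positivity)
    _ ≤ ((p : ℝ) ^ 2 + p - 1) * N ^ 2 := key
end
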